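/- arXiv:1310.7844 — 7 statements merged into one kernel-verified Lean document; each statement's English description precedes it below -/
import Mathlib

section
/- Let N ≥ 1 and let η ∈ ℂ be a primitive 2N-th root of unity. A continuous function f : ℂ → ℂ satisfies the Haruki functional equation ∑_{k=0}^{N-1} f(x + η^{2k}y) = ∑_{k=0}^{N-1} f(x + η^{2k+1}y) for all x,y ∈ ℂ if and only if there exist complex coefficients a_{i,j} (0 ≤ i,j ≤ N-1) such that f(z) = ∑_{i=0}^{N-1} ∑_{j=0}^{N-1} a_{i,j} z^i·conj(z)^j for all z ∈ ℂ. -/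
open Finset fwdDiff Polynomial

namespace HarukiProof

lemma sum_range_even_odd (n : ℕ) (v : ℕ → ℂ) :
    ∑ m ∈ range (2*n), v m = ∑ k ∈ range n, v (2*k) + ∑ k ∈ range n, v (2*k+1) := by
  induction n with
  | zero => simp
  | succ n ih =>
    have h2 : 2*(n+1) = (2*n) + 1 + 1 := by ring
    rw [h2, sum_range_succ, sum_range_succ, ih, sum_range_succ, sum_range_succ (fun k => v (2*k+1))]
    abel

lemma polyR_zero (p : Polynomial ℂ) (h : ∀ t : ℝ, p.eval (t:ℂ) = 0) : p = 0 := by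
  apply p.eq_zero_of_infinite_isRoot
  apply Set.infinite_of_injective_forall_mem (f := fun t : ℝ => (t : ℂ))
  · exact Complex.ofReal_injective
  · exact fun t => h t

lemma oneIndep (K : ℕ) (c : ℕ → ℂ) (h : ∀ z : ℂ, ∑ A ∈ range K, c A * z ^ A = 0) :
    ∀ A ∈ range K, c A = 0 := by
  intro A hA
  have hp : (∑ B ∈ range K, Polynomial.C (c B) * Polynomial.X ^ B : Polynomial ℂ) = 0 := by
    apply polyR_zero
    intro t
    rw [Polynomial.eval_finset_sum]
    simpa using h (t : ℂ)
  have := congrArg (fun p => Polynomial.coeff p A) hp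
  simpa [Polynomial.finset_sum_coeff, Polynomial.coeff_C_mul, Polynomial.coeff_X_pow,
    Finset.sum_ite_eq' (range K), hA] using this

lemma biIndep (K : ℕ) (c : ℕ → ℕ → ℂ)
    (h : ∀ z : ℂ, ∑ A ∈ range K, ∑ B ∈ range K, c A B * z ^ A * (starRingEnd ℂ) z ^ B = 0) :
    ∀ A ∈ range K, ∀ B ∈ range K, c A B = 0 := by
  -- first: full 2-variable independence
  have key : ∀ z w : ℂ, ∑ A ∈ range K, ∑ B ∈ range K, c A B * z ^ A * w ^ B = 0 := by
    -- build a polynomial in two variables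
    set q : Polynomial (Polynomial ℂ) :=
      ∑ A ∈ range K, ∑ B ∈ range K, Polynomial.C (Polynomial.C (c A B)) *
        (Polynomial.X + Polynomial.C (Polynomial.C Complex.I) * Polynomial.C Polynomial.X) ^ A *
        (Polynomial.X - Polynomial.C (Polynomial.C Complex.I) * Polynomial.C Polynomial.X) ^ B
        with hq
    have hev : ∀ s t : ℂ, q.eval₂ (Polynomial.evalRingHom t) s =
        ∑ A ∈ range K, ∑ B ∈ range K, c A B * (s + Complex.I*t) ^ A * (s - Complex.I*t) ^ B := by
      intro s t
      rw [hq]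
      rw [Polynomial.eval₂_finset_sum]
      refine Finset.sum_congr rfl fun A _ => ?_
      rw [Polynomial.eval₂_finset_sum]
      refine Finset.sum_congr rfl fun B _ => ?_
      simp only [Polynomial.eval₂_mul, Polynomial.eval₂_pow, Polynomial.eval₂_add,
        Polynomial.eval₂_sub, Polynomial.eval₂_X, Polynomial.eval₂_C,
        Polynomial.coe_evalRingHom, Polynomial.eval_C, Polynomial.eval_X]
      try ring
    have hq0 : q = 0 := by
      apply Polynomial.ext
      intro i
      have h1 : ∀ t : ℝ, (q.coeff i).eval ((t:ℝ):ℂ) = 0 := by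
        intro t
        have h2 : (q.map (Polynomial.evalRingHom ((t:ℝ):ℂ))) = 0 := by
          apply polyR_zero
          intro s
          rw [Polynomial.eval_map]
          rw [hev s t]
          have := h ((s:ℂ) + Complex.I*t)
          have hc : (starRingEnd ℂ) ((s:ℂ) + Complex.I*t) = (s:ℂ) - Complex.I*t := by
            simp [Complex.ext_iff]
          rw [hc] at this
          exact this
        have := congrArg (fun p => Polynomial.coeff p i) h2
        simpa [Polynomial.coeff_map] using this
      have := polyR_zero (q.coeff i) h1
      simpa using this
    intro z w
    have := hev ((z+w)/2) ((z-w)/(2*Complex.I))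
    rw [hq0] at this
    simp only [Polynomial.eval₂_zero] at this
    have e1 : (z+w)/2 + Complex.I * ((z-w)/(2*Complex.I)) = z := by
      have : (2*Complex.I) ≠ 0 := by simp [Complex.I_ne_zero]
      field_simp
      ring
    have e2 : (z+w)/2 - Complex.I * ((z-w)/(2*Complex.I)) = w := by
      have : (2*Complex.I) ≠ 0 := by simp [Complex.I_ne_zero]
      field_simp
      ring
    rw [e1, e2] at this
    exact this.symm
  intro A hA B hB
  have h1 : ∀ w : ℂ, ∑ B ∈ range K, c A B * w ^ B = 0 := by
    intro w
    have h2 : ∀ z : ℂ, ∑ A ∈ range K, (∑ B ∈ range K, c A B * w ^ B) * z ^ A = 0 := by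
      intro z
      rw [← key z w]
      refine Finset.sum_congr rfl fun A _ => ?_
      rw [Finset.sum_mul]
      refine Finset.sum_congr rfl fun B _ => ?_
      ring
    exact oneIndep K _ h2 A hA
  exact oneIndep K _ (fun w => by simpa using h1 w) B hB


variable {N : ℕ} {η : ℂ}

lemma eta_pow (hη : IsPrimitiveRoot η (2*N)) : η ^ (2*N) = 1 := hη.pow_eq_one

lemma eta_pow_N (hN : 1 ≤ N) (hη : IsPrimitiveRoot η (2*N)) : η ^ N = -1 := by
  have h2 : IsPrimitiveRoot (η ^ N) 2 := hη.pow (by omega) (by ring)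
  exact h2.eq_neg_one_of_two_right

lemma eta_ne_zero (hN : 1 ≤ N) (hη : IsPrimitiveRoot η (2*N)) : η ≠ 0 := by
  intro h
  have h1 := eta_pow hη
  rw [h, zero_pow (by omega : 2*N ≠ 0)] at h1
  exact zero_ne_one h1

lemma eta_conj (hN : 1 ≤ N) (hη : IsPrimitiveRoot η (2*N)) :
    (starRingEnd ℂ) η = η ^ (2*N - 1) := by
  have hnorm : ‖η‖ = 1 := Complex.norm_eq_one_of_pow_eq_one (eta_pow hη) (by omega)
  have h1 : η * (starRingEnd ℂ) η = 1 := by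
    rw [Complex.mul_conj]
    norm_cast
    rw [Complex.normSq_eq_norm_sq]
    simp only [hnorm]
    norm_num
  have h2 : η * η ^ (2*N - 1) = 1 := by
    rw [← pow_succ']
    have h3 : 2*N - 1 + 1 = 2*N := by omega
    rw [h3]
    exact eta_pow hη
  exact mul_left_cancel₀ (eta_ne_zero hN hη) (h1.trans h2.symm)

/-- The character sum `S a b = ∑_{m<2N} (-1)^m η^{ma} (conj η)^{mb}`. -/
noncomputable def Ssum (N : ℕ) (η : ℂ) (a b : ℕ) : ℂ :=
  ∑ m ∈ range (2*N), (-1:ℂ)^m * η^(m*a) * ((starRingEnd ℂ) η)^(m*b)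

lemma Ssum_eq_geom (hN : 1 ≤ N) (hη : IsPrimitiveRoot η (2*N)) (a b : ℕ) :
    Ssum N η a b = ∑ m ∈ range (2*N), (η ^ (N + a + (2*N-1)*b)) ^ m := by
  unfold Ssum
  refine Finset.sum_congr rfl fun m _ => ?_
  rw [eta_conj hN hη, ← eta_pow_N hN hη]
  rw [← pow_mul, ← pow_mul, ← pow_mul, ← pow_add, ← pow_add]
  congr 1
  ring

lemma Ssum_of_not_dvd (hN : 1 ≤ N) (hη : IsPrimitiveRoot η (2*N)) (a b : ℕ)
    (h : ¬ (2*N ∣ N + a + (2*N-1)*b)) : Ssum N η a b = 0 := by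
  rw [Ssum_eq_geom hN hη]
  have hne : η ^ (N + a + (2*N-1)*b) ≠ 1 :=
    fun h1 => h ((hη.pow_eq_one_iff_dvd _).mp h1)
  rw [geom_sum_eq hne]
  rw [← pow_mul, mul_comm (N + a + (2*N-1)*b) (2*N), pow_mul, eta_pow hη, one_pow]
  simp

lemma Ssum_of_dvd (hN : 1 ≤ N) (hη : IsPrimitiveRoot η (2*N)) (a b : ℕ)
    (h : 2*N ∣ N + a + (2*N-1)*b) : Ssum N η a b = (2*N : ℂ) := by
  rw [Ssum_eq_geom hN hη]
  have hone : η ^ (N + a + (2*N-1)*b) = 1 := (hη.pow_eq_one_iff_dvd _).2 h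
  rw [hone]
  simp

lemma not_dvd_small (hN : 1 ≤ N) {a b : ℕ} (ha : a < N) (hb : b < N) :
    ¬ (2*N ∣ N + a + (2*N-1)*b) := by
  intro h
  obtain ⟨c, hc⟩ := h
  have hc' : (N:ℤ) + a + (2*(N:ℤ)-1)*b = 2*N*c := by
    have h0 := congrArg (Nat.cast : ℕ → ℤ) hc
    push_cast [Nat.cast_sub (by omega : 1 ≤ 2*N)] at h0
    linarith
  have h2 : (2*(N:ℤ)) ∣ ((N:ℤ) + a - b) := ⟨(c:ℤ) - b, by linarith⟩
  have hb' : (b:ℤ) < N := by exact_mod_cast hb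
  have ha' : (a:ℤ) < N := by exact_mod_cast ha
  have hbpos : (0:ℤ) ≤ a := Int.natCast_nonneg a
  have hbpos' : (0:ℤ) ≤ b := Int.natCast_nonneg b
  have hpos : 0 < (N:ℤ) + a - b := by omega
  have hlt : (N:ℤ) + a - b < 2*N := by omega
  have := Int.le_of_dvd hpos h2
  omega

lemma dvd_N_0 : 2*N ∣ N + N + (2*N-1)*0 := ⟨1, by omega⟩

lemma dvd_0_N (hN : 1 ≤ N) : 2*N ∣ N + 0 + (2*N-1)*N := by
  refine ⟨N, ?_⟩
  obtain ⟨n, rfl⟩ : ∃ n, N = n + 1 := ⟨N-1, by omega⟩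
  have h1 : 2*(n+1) - 1 = 2*n+1 := by omega
  rw [h1]
  ring

/-- binomial expansion of a typical term -/
lemma term_expand (i j : ℕ) (x y w : ℂ) :
    (x + w*y)^i * (starRingEnd ℂ) (x + w*y) ^ j =
      ∑ A ∈ range (i+1), ∑ B ∈ range (j+1),
        (i.choose A : ℂ) * (j.choose B : ℂ) * x^A * ((starRingEnd ℂ) x)^B *
          (y^(i-A) * ((starRingEnd ℂ) y)^(j-B)) *
          (w^(i-A) * ((starRingEnd ℂ) w)^(j-B)) := by
  rw [map_add, map_mul]
  rw [add_pow, add_pow, Finset.sum_mul_sum]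
  refine Finset.sum_congr rfl fun A hA => Finset.sum_congr rfl fun B hB => ?_
  rw [mul_pow, mul_pow]
  ring




variable {N : ℕ} {η : ℂ}

lemma alternating_eq (N : ℕ) (η : ℂ) (f : ℂ → ℂ) (x y : ℂ) :
    ∑ m ∈ range (2*N), (-1:ℂ)^m * f (x + η^m * y) =
      (∑ k ∈ range N, f (x + η^(2*k)*y)) - (∑ k ∈ range N, f (x + η^(2*k+1)*y)) := by
  rw [sum_range_even_odd]
  have h1 : ∀ k, (-1:ℂ)^(2*k) * f (x + η^(2*k)*y) = f (x + η^(2*k)*y) := by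
    intro k
    rw [pow_mul]
    norm_num
  have h2 : ∀ k, (-1:ℂ)^(2*k+1) * f (x + η^(2*k+1)*y) = -(f (x + η^(2*k+1)*y)) := by
    intro k
    rw [pow_succ, pow_mul]
    norm_num
  rw [Finset.sum_congr rfl (fun k _ => h1 k), Finset.sum_congr rfl (fun k _ => h2 k)]
  rw [Finset.sum_neg_distrib]
  ring

/-- Reverse direction: polynomial representations satisfy the alternating equation. -/
lemma reverse_alt (hN : 1 ≤ N) (hη : IsPrimitiveRoot η (2*N)) (f : ℂ → ℂ)
    (a : Fin N → Fin N → ℂ)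
    (hrep : ∀ z : ℂ, f z = ∑ i : Fin N, ∑ j : Fin N,
      a i j * z ^ (i : ℕ) * (starRingEnd ℂ) z ^ (j : ℕ)) (x y : ℂ) :
    ∑ m ∈ range (2*N), (-1:ℂ)^m * f (x + η^m * y) = 0 := by
  have hterm : ∀ m : ℕ, (-1:ℂ)^m * f (x + η^m * y) =
      ∑ i : Fin N, ∑ j : Fin N, ∑ A ∈ range ((i:ℕ)+1), ∑ B ∈ range ((j:ℕ)+1),
        (a i j * ((i:ℕ).choose A : ℂ) * ((j:ℕ).choose B : ℂ) * x^A * ((starRingEnd ℂ) x)^B *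
          (y^((i:ℕ)-A) * ((starRingEnd ℂ) y)^((j:ℕ)-B))) *
        ((-1:ℂ)^m * η^(m*((i:ℕ)-A)) * ((starRingEnd ℂ) η)^(m*((j:ℕ)-B))) := by
    intro m
    rw [hrep, Finset.mul_sum]
    refine Finset.sum_congr rfl fun i _ => ?_
    rw [Finset.mul_sum]
    refine Finset.sum_congr rfl fun j _ => ?_
    rw [mul_assoc (a i j), term_expand (i:ℕ) (j:ℕ) x y (η^m)]
    rw [Finset.mul_sum, Finset.mul_sum]
    refine Finset.sum_congr rfl fun A _ => ?_
    rw [Finset.mul_sum, Finset.mul_sum]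
    refine Finset.sum_congr rfl fun B _ => ?_
    have e1 : (η^m)^((i:ℕ)-A) = η^(m*((i:ℕ)-A)) := by rw [← pow_mul]
    have e2 : ((starRingEnd ℂ) (η^m))^((j:ℕ)-B) = ((starRingEnd ℂ) η)^(m*((j:ℕ)-B)) := by
      rw [map_pow, ← pow_mul]
    rw [e1, e2]
    ring
  rw [Finset.sum_congr rfl (fun m _ => hterm m)]
  rw [Finset.sum_comm]
  refine Finset.sum_eq_zero fun i _ => ?_
  rw [Finset.sum_comm]
  refine Finset.sum_eq_zero fun j _ => ?_
  rw [Finset.sum_comm]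
  refine Finset.sum_eq_zero fun A hA => ?_
  rw [Finset.sum_comm]
  refine Finset.sum_eq_zero fun B hB => ?_
  rw [← Finset.mul_sum]
  have hS : Ssum N η ((i:ℕ)-A) ((j:ℕ)-B) = 0 := by
    apply Ssum_of_not_dvd hN hη
    apply not_dvd_small hN
    · have := i.isLt; omega
    · have := j.isLt; omega
  unfold Ssum at hS
  rw [hS, mul_zero]



/-- iterated forward differences with steps `t i * (η^m - η^(i+1))` -/
noncomputable def ddW (η : ℂ) (m : ℕ) (t : ℕ → ℂ) : ℕ → (ℂ → ℂ) → (ℂ → ℂ)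
  | 0, g => g
  | (s+1), g => Δ_[t s * (η^m - η^(s+1))] (ddW η m t s g)

variable {N : ℕ} {η : ℂ} {f : ℂ → ℂ}

lemma master_filter (hN : 1 ≤ N)
    (hfe : ∀ x y : ℂ, ∑ m ∈ range (2*N), (-1:ℂ)^m * f (x + η^m*y) = 0) :
    ∀ s, s ≤ 2*N-1 → ∀ (t : ℕ → ℂ) (x y : ℂ),
      ∑ m ∈ (range (2*N)).filter (fun m => m = 0 ∨ s < m),
        (-1:ℂ)^m * (ddW η m t s f) (x + η^m*y) = 0 := by
  intro s
  induction s with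
  | zero =>
    intro _ t x y
    have : (range (2*N)).filter (fun m => m = 0 ∨ 0 < m) = range (2*N) := by
      apply Finset.filter_true_of_mem
      intro m _
      omega
    rw [this]
    exact hfe x y
  | succ s IH =>
    intro hs t x y
    have hs' : s ≤ 2*N-1 := by omega
    have hsplit : (range (2*N)).filter (fun m => m = 0 ∨ s < m) =
        insert (s+1) ((range (2*N)).filter (fun m => m = 0 ∨ s+1 < m)) := by
      ext m
      simp only [Finset.mem_filter, Finset.mem_insert, Finset.mem_range]
      omega
    have hnotmem : (s+1) ∉ (range (2*N)).filter (fun m => m = 0 ∨ s+1 < m) := by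
      simp only [Finset.mem_filter, Finset.mem_range]
      omega
    have key : ∑ m ∈ (range (2*N)).filter (fun m => m = 0 ∨ s < m),
        (-1:ℂ)^m * (ddW η m t (s+1) f) (x + η^m*y) = 0 := by
      have h1 := IH hs' t x y
      have h2 := IH hs' t (x - η^(s+1) * t s) (y + t s)
      have hterm : ∀ m ∈ (range (2*N)).filter (fun m => m = 0 ∨ s < m),
          (-1:ℂ)^m * (ddW η m t (s+1) f) (x + η^m*y) =
          (-1:ℂ)^m * (ddW η m t s f) ((x - η^(s+1) * t s) + η^m*(y + t s)) -
          (-1:ℂ)^m * (ddW η m t s f) (x + η^m*y) := by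
        intro m _
        show (-1:ℂ)^m * (Δ_[t s * (η^m - η^(s+1))] (ddW η m t s f)) (x + η^m*y) = _
        rw [fwdDiff]
        have harg : x + η^m*y + t s * (η^m - η^(s+1)) =
            (x - η^(s+1) * t s) + η^m*(y + t s) := by ring
        rw [harg]
        ring
      rw [Finset.sum_congr rfl hterm, Finset.sum_sub_distrib, h1, h2, sub_zero]
    rw [hsplit, Finset.sum_insert hnotmem] at key
    have hzero : (-1:ℂ)^(s+1) * (ddW η (s+1) t (s+1) f) (x + η^(s+1)*y) = 0 := by
      show (-1:ℂ)^(s+1) * (Δ_[t s * (η^(s+1) - η^(s+1))] (ddW η (s+1) t s f)) _ = 0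
      rw [fwdDiff]
      simp
    rw [hzero, zero_add] at key
    exact key

/-- Main conclusion of step F1: all (2N-1)-fold iterated differences of f vanish. -/
lemma master (hN : 1 ≤ N) (hη : IsPrimitiveRoot η (2*N))
    (hfe : ∀ x y : ℂ, ∑ m ∈ range (2*N), (-1:ℂ)^m * f (x + η^m*y) = 0) (u : ℂ) :
    Δ_[u] ^[2*N-1] f = 0 := by
  set t : ℕ → ℂ := fun i => u / (1 - η^(i+1)) with ht
  have hconv : ∀ s, s ≤ 2*N-1 → ddW η 0 t s f = Δ_[u] ^[s] f := by
    intro s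
    induction s with
    | zero => intro _; rfl
    | succ s IH =>
      intro hs
      have hne : η^(s+1) ≠ 1 := hη.pow_ne_one_of_pos_of_lt (by omega) (by omega)
      have hstep : t s * (η^0 - η^(s+1)) = u := by
        rw [ht]
        simp only [pow_zero]
        field_simp [sub_ne_zero.2 (Ne.symm hne)]
      show Δ_[t s * (η^0 - η^(s+1))] (ddW η 0 t s f) = _
      rw [hstep, IH (by omega)]
      exact (Function.iterate_succ_apply' _ s f).symm ▸ rfl
  have hfil : (range (2*N)).filter (fun m => m = 0 ∨ 2*N-1 < m) = {0} := by
    ext m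
    simp only [Finset.mem_filter, Finset.mem_range, Finset.mem_singleton]
    omega
  have h := master_filter hN hfe (2*N-1) le_rfl t
  rw [hfil] at h
  funext z
  have h2 := h z 0
  rw [Finset.sum_singleton] at h2
  simp only [pow_zero, one_mul, mul_zero, add_zero] at h2
  rw [hconv (2*N-1) le_rfl] at h2
  simpa using h2



lemma fwd_zero {α : Type*} [AddCommMonoid α] (k : α) : Δ_[k] (0 : α → ℂ) = 0 :=
  funext fun x => by simp [fwdDiff]

lemma iter_zero {α : Type*} [AddCommMonoid α] (k : α) (i : ℕ) :
    Δ_[k] ^[i] (0 : α → ℂ) = 0 := by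
  induction i with
  | zero => rfl
  | succ i IH => rw [Function.iterate_succ_apply, fwd_zero, IH]

lemma iter_vanish {α : Type*} [AddCommMonoid α] (k : α) (g : α → ℂ) (M : ℕ)
    (h : Δ_[k] ^[M] g = 0) {j : ℕ} (hj : M ≤ j) : Δ_[k] ^[j] g = 0 := by
  obtain ⟨i, rfl⟩ := Nat.exists_eq_add_of_le hj
  rw [add_comm, Function.iterate_add_apply, h, iter_zero]

lemma newton_trunc (M : ℕ) (g : ℝ → ℂ) (k : ℝ)
    (hD : Δ_[k] ^[M] g = 0) (x : ℝ) (n : ℕ) :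
    g (x + n * k) = ∑ j ∈ range M, (n.choose j : ℂ) * Δ_[k] ^[j] g x := by
  have h0 := shift_eq_sum_fwdDiff_iter k g n x
  rw [nsmul_eq_mul] at h0
  set L := max (n+1) M with hL
  have e1 : ∑ j ∈ range (n+1), n.choose j • Δ_[k] ^[j] g x
      = ∑ j ∈ range L, (n.choose j : ℂ) * Δ_[k] ^[j] g x := by
    rw [Finset.sum_congr rfl (fun j _ => by rw [nsmul_eq_mul])]
    apply Finset.sum_subset
    · exact Finset.range_subset_range.2 (le_max_left _ _)
    · intro j hjL hjn
      rw [Finset.mem_range] at hjL hjn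
      have : n < j := by omega
      rw [Nat.choose_eq_zero_of_lt this]
      simp
  have e2 : ∑ j ∈ range M, (n.choose j : ℂ) * Δ_[k] ^[j] g x
      = ∑ j ∈ range L, (n.choose j : ℂ) * Δ_[k] ^[j] g x := by
    apply Finset.sum_subset
    · exact Finset.range_subset_range.2 (le_max_right _ _)
    · intro j hjL hjM
      rw [Finset.mem_range] at hjL hjM
      rw [iter_vanish k g M hD (by omega)]
      simp
  rw [h0, e1, ← e2]

noncomputable def newtonPoly (M : ℕ) (g : ℝ → ℂ) (k : ℝ) (x : ℝ) : Polynomial ℂ :=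
  ∑ j ∈ range M, Polynomial.C (Δ_[k] ^[j] g x / (j.factorial : ℂ)) * descPochhammer ℂ j

lemma newtonPoly_natDegree_lt (M : ℕ) (hM : 0 < M) (g : ℝ → ℂ) (k : ℝ) (x : ℝ) :
    (newtonPoly M g k x).natDegree < M := by
  have h : (newtonPoly M g k x).natDegree ≤ M - 1 := by
    apply Polynomial.natDegree_sum_le_of_forall_le
    intro j hj
    rw [Finset.mem_range] at hj
    calc (Polynomial.C (Δ_[k] ^[j] g x / (j.factorial : ℂ)) * descPochhammer ℂ j).natDegree
        ≤ (descPochhammer ℂ j).natDegree := Polynomial.natDegree_C_mul_le _ _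
      _ = j := descPochhammer_natDegree ℂ j
      _ ≤ M - 1 := by omega
  omega

lemma newtonPoly_eval_nat (M : ℕ) (g : ℝ → ℂ) (k : ℝ)
    (hD : Δ_[k] ^[M] g = 0) (x : ℝ) (n : ℕ) :
    (newtonPoly M g k x).eval (n:ℂ) = g (x + n * k) := by
  rw [newton_trunc M g k hD x n, newtonPoly, Polynomial.eval_finset_sum]
  refine Finset.sum_congr rfl fun j _ => ?_
  rw [Polynomial.eval_mul, Polynomial.eval_C,
    descPochhammer_eval_eq_descFactorial ℂ n j]
  have hdf : ((n.descFactorial j : ℕ) : ℂ) = (j.factorial : ℂ) * (n.choose j : ℂ) := by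
    exact_mod_cast congrArg (fun m : ℕ => (m : ℂ)) (Nat.descFactorial_eq_factorial_mul_choose n j)
  rw [hdf]
  have hfac : (j.factorial : ℂ) ≠ 0 := Nat.cast_ne_zero.2 (Nat.factorial_ne_zero j)
  field_simp

lemma C1 (M : ℕ) (hM : 0 < M) (g : ℝ → ℂ) (hc : Continuous g)
    (hD : ∀ k : ℝ, Δ_[k] ^[M] g = 0) :
    ∀ t : ℝ, g t = (newtonPoly M g 1 0).eval (t:ℂ) := by
  set P := newtonPoly M g 1 0 with hPdef
  have hP : ∀ n : ℕ, P.eval (n:ℂ) = g n := by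
    intro n
    rw [hPdef, newtonPoly_eval_nat M g 1 (hD 1) 0 n]
    norm_num
  have hQ : ∀ r : ℚ, g ((r:ℝ)) = P.eval ((r:ℝ):ℂ) := by
    intro r
    set b : ℕ := r.den with hbdef
    set a : ℤ := r.num with hadef
    have hb : 0 < b := r.pos
    have hbR : ((b:ℝ)) ≠ 0 := Nat.cast_ne_zero.2 (by omega)
    set a' : ℤ := min a 0 with ha'def
    have ha'0 : a' ≤ 0 := min_le_right _ _
    have ha'a : a' ≤ a := min_le_left _ _
    set k : ℝ := 1 / (b:ℝ) with hkdef
    set x : ℝ := (a' : ℝ) * k with hxdef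
    set Q := newtonPoly M g k x with hQdef
    have hQn : ∀ n : ℕ, Q.eval (n:ℂ) = g (x + n*k) := newtonPoly_eval_nat M g k (hD k) x
    set R := Q.comp (Polynomial.C (b:ℂ) * Polynomial.X - Polynomial.C (a':ℂ)) with hRdef
    have hR : ∀ z : ℂ, R.eval z = Q.eval ((b:ℂ)*z - (a':ℂ)) := by
      intro z
      simp [hRdef, Polynomial.eval_comp]
    -- values of R at casts of naturals i : R.eval i = g i
    have hRi : ∀ i : ℕ, R.eval ((i:ℕ):ℂ) = g ((i:ℕ):ℝ) := by
      intro i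
      set n : ℕ := b*i + (-a').toNat with hndef
      have hZ : ((n:ℕ):ℤ) = (b:ℤ)*(i:ℤ) - a' := by
        rw [hndef]
        push_cast [Int.toNat_of_nonneg (show (0:ℤ) ≤ -a' by omega)]
        ring
      have hn : ((n:ℕ):ℂ) = (b:ℂ)*(i:ℂ) - (a':ℂ) := by
        exact_mod_cast congrArg (fun m : ℤ => (m:ℂ)) hZ
      have hnR : ((n:ℕ):ℝ) = (b:ℝ)*(i:ℝ) - (a':ℝ) := by
        exact_mod_cast congrArg (fun m : ℤ => (m:ℝ)) hZ
      rw [hR, ← hn, hQn n]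
      congr 1
      rw [hxdef, hnR, hkdef]
      field_simp
      try ring
    have hRP : R = P := by
      have hsub : R - P = 0 := by
        apply Polynomial.eq_zero_of_natDegree_lt_card_of_eval_eq_zero (R - P)
          (f := fun i : Fin M => ((i:ℕ):ℂ))
        · intro i j hij
          have : ((i:ℕ):ℂ) = ((j:ℕ):ℂ) := hij
          exact Fin.ext (Nat.cast_injective this)
        · intro i
          rw [Polynomial.eval_sub, hRi (i:ℕ), hP (i:ℕ), sub_self]
        · rw [Fintype.card_fin]
          apply lt_of_le_of_lt (Polynomial.natDegree_sub_le _ _)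
          rw [max_lt_iff]
          constructor
          · apply lt_of_le_of_lt (Polynomial.natDegree_comp_le)
            have h1 : (Polynomial.C (b:ℂ) * Polynomial.X - Polynomial.C (a':ℂ)).natDegree ≤ 1 := by
              apply le_trans (Polynomial.natDegree_sub_le _ _)
              rw [max_le_iff]
              refine ⟨le_trans (Polynomial.natDegree_C_mul_le _ _) (by simp), by simp⟩
            calc Q.natDegree * (Polynomial.C (b:ℂ) * Polynomial.X - Polynomial.C (a':ℂ)).natDegree
                ≤ Q.natDegree * 1 := Nat.mul_le_mul_left _ h1
              _ = Q.natDegree := by ring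
              _ < M := newtonPoly_natDegree_lt M hM g k x
          · exact newtonPoly_natDegree_lt M hM g 1 0
      have := sub_eq_zero.mp hsub
      exact this
    -- now evaluate at r
    set n : ℕ := (a - a').toNat with hndef
    have hna : ((n:ℕ):ℤ) = a - a' := Int.toNat_of_nonneg (by omega)
    have hrx : (r:ℝ) = x + n * k := by
      have h1 : ((n:ℕ):ℝ) = (a:ℝ) - (a':ℝ) := by exact_mod_cast congrArg (fun m : ℤ => (m:ℝ)) hna
      rw [hxdef, h1, hkdef]
      rw [Rat.cast_def]
      field_simp
      simp only [hbdef, hadef]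
      ring
    have hrc : ((r:ℝ):ℂ) = ((a:ℂ) )/(b:ℂ) := by
      rw [Rat.cast_def]
      push_cast
      ring
    have harg : (b:ℂ) * ((r:ℝ):ℂ) - (a':ℂ) = ((n:ℕ):ℂ) := by
      have h1 : ((n:ℕ):ℂ) = (a:ℂ) - (a':ℂ) := by exact_mod_cast congrArg (fun m : ℤ => (m:ℂ)) hna
      rw [hrc, h1]
      have hbC : ((b:ℕ):ℂ) ≠ 0 := Nat.cast_ne_zero.2 (by omega)
      field_simp
    rw [hrx, ← hQn n, ← harg, ← hR, hRP]
    rw [← hrx]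
  have hgP : g = fun t : ℝ => P.eval ((t:ℝ):ℂ) := by
    apply Continuous.ext_on (Rat.denseRange_cast (𝕜 := ℝ)) hc
    · exact P.continuous_aeval.comp Complex.continuous_ofReal
    · rintro t ⟨r, rfl⟩
      exact hQ r
  intro t
  rw [hgP]

noncomputable def coefA (M : ℕ) (g : ℝ → ℂ) (a : ℕ) : ℂ :=
  ∑ j ∈ range M, (Δ_[(1:ℝ)] ^[j] g 0 / (j.factorial : ℂ)) * (descPochhammer ℂ j).coeff a

lemma C1' (M : ℕ) (hM : 0 < M) (g : ℝ → ℂ) (hc : Continuous g)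
    (hD : ∀ k : ℝ, Δ_[k] ^[M] g = 0) :
    ∀ t : ℝ, g t = ∑ a ∈ range M, coefA M g a * ((t:ℝ):ℂ)^a := by
  intro t
  rw [C1 M hM g hc hD t, newtonPoly, Polynomial.eval_finset_sum]
  have h1 : ∀ j ∈ range M, (Polynomial.C (Δ_[(1:ℝ)] ^[j] g 0 / (j.factorial : ℂ)) *
      descPochhammer ℂ j).eval ((t:ℝ):ℂ) =
      ∑ a ∈ range M, (Δ_[(1:ℝ)] ^[j] g 0 / (j.factorial : ℂ)) *
        ((descPochhammer ℂ j).coeff a * ((t:ℝ):ℂ)^a) := by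
    intro j hj
    rw [Finset.mem_range] at hj
    rw [Polynomial.eval_mul, Polynomial.eval_C,
      Polynomial.eval_eq_sum_range' (lt_of_le_of_lt (le_of_eq (descPochhammer_natDegree ℂ j)) hj),
      Finset.mul_sum]
  rw [Finset.sum_congr rfl h1, Finset.sum_comm]
  refine Finset.sum_congr rfl fun a _ => ?_
  rw [coefA, Finset.sum_mul]
  refine Finset.sum_congr rfl fun j _ => ?_
  ring


def gy (f : ℂ → ℂ) (y : ℝ) : ℝ → ℂ := fun x => f (↑x + ↑y*Complex.I)

lemma iter_sub {α : Type*} [AddCommMonoid α] (k : α) (u v : α → ℂ) (m : ℕ) :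
    Δ_[k] ^[m] (u - v) = Δ_[k] ^[m] u - Δ_[k] ^[m] v := by
  have h : u - v = u + (-1 : ℂ) • v := by
    funext w; simp [sub_eq_add_neg]
  rw [h, fwdDiff_iter_add, fwdDiff_iter_const_smul]
  funext w
  simp [sub_eq_add_neg]

lemma trans1 (f : ℂ → ℂ) (k : ℝ) (j : ℕ) :
    ∀ (y x : ℝ), Δ_[k] ^[j] (gy f y) x = Δ_[(k:ℂ)] ^[j] f (↑x + ↑y*Complex.I) := by
  induction j with
  | zero => intro y x; rfl
  | succ j IH =>
    intro y x
    rw [Function.iterate_succ_apply', Function.iterate_succ_apply']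
    rw [fwdDiff, fwdDiff, IH, IH]
    have h : ((x+k : ℝ) : ℂ) + ↑y*Complex.I = (↑x + ↑y*Complex.I) + (k:ℂ) := by
      push_cast; ring
    rw [h]

lemma trans2 (f : ℂ → ℂ) (x : ℝ) (k : ℝ) (j : ℕ) :
    ∀ y : ℝ, Δ_[k] ^[j] (fun y' : ℝ => f (↑x + ↑y'*Complex.I)) y =
      Δ_[(k:ℂ)*Complex.I] ^[j] f (↑x + ↑y*Complex.I) := by
  induction j with
  | zero => intro y; rfl
  | succ j IH =>
    intro y
    rw [Function.iterate_succ_apply', Function.iterate_succ_apply']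
    rw [fwdDiff, fwdDiff, IH, IH]
    have h : ((x : ℝ) : ℂ) + ((y+k : ℝ):ℂ)*Complex.I = (↑x + ↑y*Complex.I) + (k:ℂ)*Complex.I := by
      push_cast; ring
    rw [h]

lemma claimA (f : ℂ → ℂ) (hf : Continuous f) (j : ℕ) :
    ∀ x : ℝ, Continuous (fun y : ℝ => Δ_[(1:ℝ)] ^[j] (gy f y) x) := by
  induction j with
  | zero =>
    intro x
    show Continuous fun y : ℝ => f (↑x + ↑y*Complex.I)
    exact hf.comp (continuous_const.add (Complex.continuous_ofReal.mul continuous_const))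
  | succ j IH =>
    intro x
    simp only [Function.iterate_succ_apply', fwdDiff]
    exact (IH (x+1)).sub (IH x)

lemma claimB (M : ℕ) (f : ℂ → ℂ) (hD : ∀ u : ℂ, Δ_[u] ^[M] f = 0) (j : ℕ) :
    ∀ (x : ℝ) (k : ℝ), Δ_[k] ^[M] (fun y : ℝ => Δ_[(1:ℝ)] ^[j] (gy f y) x) = 0 := by
  induction j with
  | zero =>
    intro x k
    funext y
    show Δ_[k] ^[M] (fun y' : ℝ => f (↑x + ↑y'*Complex.I)) y = _
    rw [trans2 f x k M y, hD ((k:ℂ)*Complex.I)]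
    rfl
  | succ j IH =>
    intro x k
    have hfun : (fun y : ℝ => Δ_[(1:ℝ)] ^[j+1] (gy f y) x) =
        (fun y : ℝ => Δ_[(1:ℝ)] ^[j] (gy f y) (x+1)) -
        (fun y : ℝ => Δ_[(1:ℝ)] ^[j] (gy f y) x) := by
      funext y
      rw [Function.iterate_succ_apply']
      rfl
    rw [hfun, iter_sub, IH (x+1) k, IH x k, sub_zero]

lemma C2 (M : ℕ) (hM : 0 < M) (f : ℂ → ℂ) (hf : Continuous f)
    (hD : ∀ u : ℂ, Δ_[u] ^[M] f = 0) :
    ∃ d : ℕ → ℕ → ℂ, ∀ z : ℂ,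
      f z = ∑ a ∈ range M, ∑ b ∈ range M, d a b * ((z.re : ℝ):ℂ)^a * ((z.im : ℝ):ℂ)^b := by
  have hgyc : ∀ y : ℝ, Continuous (gy f y) :=
    fun y => hf.comp (Complex.continuous_ofReal.add continuous_const)
  have hgyD : ∀ (y : ℝ) (k : ℝ), Δ_[k] ^[M] (gy f y) = 0 := by
    intro y k
    funext x
    rw [trans1 f k M y x, hD (k:ℂ)]
    rfl
  have hrep1 : ∀ (y x : ℝ), f (↑x + ↑y*Complex.I) =
      ∑ a ∈ range M, coefA M (gy f y) a * (x:ℂ)^a := by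
    intro y x
    exact C1' M hM (gy f y) (hgyc y) (hgyD y) x
  set ca : ℕ → ℝ → ℂ := fun a y => coefA M (gy f y) a with hca
  have hcac : ∀ a, Continuous (ca a) := by
    intro a
    apply continuous_finset_sum
    intro j _
    exact (((claimA f hf j 0).div_const _).mul continuous_const)
  have hcaD : ∀ (a : ℕ) (k : ℝ), Δ_[k] ^[M] (ca a) = 0 := by
    intro a k
    have h1 : ca a = ∑ j ∈ range M,
        (((descPochhammer ℂ j).coeff a / (j.factorial : ℂ)) •
          (fun y : ℝ => Δ_[(1:ℝ)] ^[j] (gy f y) 0)) := by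
      funext y
      rw [Finset.sum_apply]
      unfold ca
      unfold coefA
      refine Finset.sum_congr rfl fun j _ => ?_
      simp [smul_eq_mul]
      ring
    rw [h1, fwdDiff_iter_finset_sum]
    refine Finset.sum_eq_zero fun j _ => ?_
    rw [fwdDiff_iter_const_smul, claimB M f hD j 0 k, smul_zero]
  refine ⟨fun a b => coefA M (ca a) b, fun z => ?_⟩
  have hz : f z = f (↑z.re + ↑z.im*Complex.I) := by rw [Complex.re_add_im]
  rw [hz, hrep1 z.im z.re]
  refine Finset.sum_congr rfl fun a _ => ?_
  have h2 : ca a z.im = ∑ b ∈ range M, coefA M (ca a) b * ((z.im:ℝ):ℂ)^b :=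
    C1' M hM (ca a) (hcac a) (hcaD a) z.im
  show ca a z.im * _ = _
  rw [h2, Finset.sum_mul]
  refine Finset.sum_congr rfl fun b _ => ?_
  ring



lemma hre (z : ℂ) : ((z.re : ℝ) : ℂ) = (z + (starRingEnd ℂ) z)/2 := by
  rw [Complex.add_conj]
  push_cast
  ring

lemma him (z : ℂ) : ((z.im : ℝ) : ℂ) = (z - (starRingEnd ℂ) z)/(2*Complex.I) := by
  rw [Complex.sub_conj]
  have h : (2:ℂ)*Complex.I ≠ 0 := by simp [Complex.I_ne_zero]
  field_simp
  simp [Complex.ofReal_mul, mul_comm]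

lemma span_step (M : ℕ) (f : ℂ → ℂ) (d : ℕ → ℕ → ℂ)
    (hrep : ∀ z : ℂ, f z = ∑ a ∈ range M, ∑ b ∈ range M,
      d a b * ((z.re : ℝ):ℂ)^a * ((z.im : ℝ):ℂ)^b) :
    ∃ e : ℕ → ℕ → ℂ, ∀ z : ℂ, f z = ∑ p ∈ range (2*M), ∑ q ∈ range (2*M),
      e p q * z^p * (starRingEnd ℂ) z^q := by
  set K := 2*M with hK
  set φ : Fin K × Fin K → (ℂ → ℂ) :=
    fun pq => fun z => z^(pq.1 : ℕ) * (starRingEnd ℂ) z^(pq.2 : ℕ) with hφ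
  have hmono : ∀ p q : ℕ, p < K → q < K →
      (fun z : ℂ => z^p * (starRingEnd ℂ) z^q) ∈ Submodule.span ℂ (Set.range φ) := by
    intro p q hp hq
    apply Submodule.subset_span
    exact ⟨(⟨p,hp⟩,⟨q,hq⟩), rfl⟩
  have hterm : ∀ a b : ℕ, a < M → b < M →
      (fun z : ℂ => d a b * ((z.re : ℝ):ℂ)^a * ((z.im : ℝ):ℂ)^b) ∈
        Submodule.span ℂ (Set.range φ) := by
    intro a b ha hb
    have hfun : (fun z : ℂ => d a b * ((z.re : ℝ):ℂ)^a * ((z.im : ℝ):ℂ)^b) =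
        ∑ A ∈ range (a+1), ∑ B ∈ range (b+1),
          (d a b * (a.choose A : ℂ) * (b.choose B : ℂ) * (-1)^(b-B) /
            (2^a * (2*Complex.I)^b)) •
          (fun z : ℂ => z^(A+B) * (starRingEnd ℂ) z^((a-A)+(b-B))) := by
      funext z
      simp only [Finset.sum_apply, Pi.smul_apply, smul_eq_mul]
      set w := (starRingEnd ℂ) z with hw
      have hr : ∑ A ∈ range (a+1), ∑ B ∈ range (b+1),
          (d a b * (a.choose A : ℂ) * (b.choose B : ℂ) * (-1)^(b-B) /
            (2^a * (2*Complex.I)^b)) * (z^(A+B) * w^((a-A)+(b-B))) =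
          (d a b / (2^a * (2*Complex.I)^b)) * ((z+w)^a * (z+(-w))^b) := by
        rw [add_pow, add_pow, Finset.sum_mul_sum, Finset.mul_sum]
        refine Finset.sum_congr rfl fun A hA => ?_
        rw [Finset.mul_sum]
        refine Finset.sum_congr rfl fun B hB => ?_
        rw [neg_pow w (b-B), pow_add z A B, pow_add w (a-A) (b-B)]
        ring
      rw [hr, hre z, him z, ← hw, ← sub_eq_add_neg]
      have h2 : (2:ℂ) ≠ 0 := two_ne_zero
      have h2I : (2:ℂ)*Complex.I ≠ 0 := by simp [Complex.I_ne_zero]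
      rw [div_pow, div_pow]
      field_simp
    rw [hfun]
    refine Submodule.sum_mem _ fun A hA => Submodule.sum_mem _ fun B hB => ?_
    apply Submodule.smul_mem
    rw [Finset.mem_range] at hA hB
    exact hmono _ _ (by omega) (by omega)
  have hfmem : f ∈ Submodule.span ℂ (Set.range φ) := by
    have hfeq : f = ∑ a ∈ range M, ∑ b ∈ range M,
        (fun z : ℂ => d a b * ((z.re : ℝ):ℂ)^a * ((z.im : ℝ):ℂ)^b) := by
      funext z
      rw [hrep z]
      rw [Finset.sum_apply]
      exact Finset.sum_congr rfl fun a _ => by rw [Finset.sum_apply]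
    rw [hfeq]
    refine Submodule.sum_mem _ fun a ha => Submodule.sum_mem _ fun b hb => ?_
    rw [Finset.mem_range] at ha hb
    exact hterm a b ha hb
  obtain ⟨c, hc⟩ := (Submodule.mem_span_range_iff_exists_fun ℂ).1 hfmem
  refine ⟨fun p q => if h : p < K ∧ q < K then c (⟨p, h.1⟩, ⟨q, h.2⟩) else 0, fun z => ?_⟩
  have h1 : f z = ∑ i : Fin K × Fin K, c i * (z^(i.1 : ℕ) * (starRingEnd ℂ) z^(i.2 : ℕ)) := by
    rw [← hc]
    rw [Finset.sum_apply]
    rfl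
  rw [h1, Fintype.sum_prod_type]
  symm
  simp only [Finset.sum_range]
  refine Finset.sum_congr rfl fun p _ => Finset.sum_congr rfl fun q _ => ?_
  rw [dif_pos (⟨p.isLt, q.isLt⟩ : (p:ℕ) < K ∧ (q:ℕ) < K)]
  simp only [Fin.eta]
  ring

lemma F3 {N : ℕ} {η : ℂ} (hN : 1 ≤ N) (hη : IsPrimitiveRoot η (2*N)) (f : ℂ → ℂ)
    (K : ℕ) (e : ℕ → ℕ → ℂ)
    (hrep : ∀ z : ℂ, f z = ∑ p ∈ range K, ∑ q ∈ range K,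
      e p q * z^p * (starRingEnd ℂ) z^q)
    (hfe : ∀ x y : ℂ, ∑ m ∈ range (2*N), (-1:ℂ)^m * f (x + η^m * y) = 0) :
    ∀ p ∈ range K, ∀ q ∈ range K, (N ≤ p ∨ N ≤ q) → e p q = 0 := by
  set G : ℕ → ℕ → ℂ → ℂ := fun p q lam =>
    ∑ m ∈ range (2*N), (-1:ℂ)^m * ((lam+η^m)^p * (starRingEnd ℂ) (lam+η^m)^q) with hGdef
  -- Step 1+2: e p q * G p q lam = 0 for all p q in range, lam.
  have hEG : ∀ (lam : ℂ), ∀ p ∈ range K, ∀ q ∈ range K, e p q * G p q lam = 0 := by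
    intro lam
    apply biIndep K (fun p q => e p q * G p q lam)
    intro z
    have h0 := hfe (lam * z) z
    have hterm : ∀ m : ℕ, (-1:ℂ)^m * f (lam * z + η^m * z) =
        ∑ p ∈ range K, ∑ q ∈ range K,
          (e p q * z^p * (starRingEnd ℂ) z^q) *
            ((-1:ℂ)^m * ((lam+η^m)^p * (starRingEnd ℂ) (lam+η^m)^q)) := by
      intro m
      have harg : lam * z + η^m * z = (lam + η^m) * z := by ring
      rw [harg, hrep ((lam + η^m) * z), Finset.mul_sum]
      refine Finset.sum_congr rfl fun p _ => ?_
      rw [Finset.mul_sum]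
      refine Finset.sum_congr rfl fun q _ => ?_
      rw [mul_pow, map_mul, mul_pow]
      ring
    rw [Finset.sum_congr rfl (fun m _ => hterm m), Finset.sum_comm] at h0
    rw [← h0]
    refine Finset.sum_congr rfl fun p _ => ?_
    rw [Finset.sum_comm]
    refine Finset.sum_congr rfl fun q _ => ?_
    rw [← Finset.mul_sum, hGdef]
    ring
  intro p hp q hq hbad
  by_contra hne
  have hG0 : ∀ lam : ℂ, G p q lam = 0 := by
    intro lam
    have := hEG lam p hp q hq
    exact (mul_eq_zero.mp this).resolve_left hne
  rw [Finset.mem_range] at hp hq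
  set c' : ℕ → ℕ → ℂ := fun A B =>
    if A ≤ p ∧ B ≤ q then (p.choose A : ℂ)*(q.choose B : ℂ)*Ssum N η (p-A) (q-B) else 0
    with hc'
  -- expansion of G
  have h3 : ∀ lam : ℂ, G p q lam = ∑ A ∈ range (p+1), ∑ B ∈ range (q+1),
      ((p.choose A : ℂ)*(q.choose B : ℂ)*lam^A*((starRingEnd ℂ) lam)^B) *
        Ssum N η (p-A) (q-B) := by
    intro lam
    have hterm : ∀ m : ℕ, (-1:ℂ)^m * ((lam+η^m)^p * (starRingEnd ℂ) (lam+η^m)^q) =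
        ∑ A ∈ range (p+1), ∑ B ∈ range (q+1),
          ((p.choose A : ℂ)*(q.choose B : ℂ)*lam^A*((starRingEnd ℂ) lam)^B) *
            ((-1:ℂ)^m * η^(m*(p-A)) * ((starRingEnd ℂ) η)^(m*(q-B))) := by
      intro m
      have e0 : lam + η^m = lam + η^m * 1 := by ring
      rw [e0, term_expand p q lam 1 (η^m)]
      rw [Finset.mul_sum]
      refine Finset.sum_congr rfl fun A _ => ?_
      rw [Finset.mul_sum]
      refine Finset.sum_congr rfl fun B _ => ?_
      have e1 : (η^m)^(p-A) = η^(m*(p-A)) := by rw [← pow_mul]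
      have e2 : ((starRingEnd ℂ) (η^m))^(q-B) = ((starRingEnd ℂ) η)^(m*(q-B)) := by
        rw [map_pow, ← pow_mul]
      rw [e1, e2, map_one]
      ring
    rw [hGdef]
    show ∑ m ∈ range (2*N), (-1:ℂ)^m * ((lam+η^m)^p * (starRingEnd ℂ) (lam+η^m)^q) = _
    rw [Finset.sum_congr rfl (fun m _ => hterm m), Finset.sum_comm]
    refine Finset.sum_congr rfl fun A _ => ?_
    rw [Finset.sum_comm]
    refine Finset.sum_congr rfl fun B _ => ?_
    rw [← Finset.mul_sum]
    rfl
  -- padded expansion equals G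
  have hGfull : ∀ lam : ℂ, ∑ A ∈ range K, ∑ B ∈ range K,
      c' A B * lam^A * (starRingEnd ℂ) lam^B = 0 := by
    intro lam
    have houter : ∑ A ∈ range K, ∑ B ∈ range K, c' A B * lam^A * (starRingEnd ℂ) lam^B
        = ∑ A ∈ range (p+1), ∑ B ∈ range K, c' A B * lam^A * (starRingEnd ℂ) lam^B := by
      symm
      apply Finset.sum_subset (Finset.range_subset_range.2 (by omega : p+1 ≤ K))
      intro A hA hA'
      rw [Finset.mem_range] at hA hA'
      refine Finset.sum_eq_zero fun B _ => ?_
      rw [hc']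
      simp only
      rw [if_neg (by omega)]
      ring
    have hinner : ∀ A ∈ range (p+1), ∑ B ∈ range K, c' A B * lam^A * (starRingEnd ℂ) lam^B
        = ∑ B ∈ range (q+1), c' A B * lam^A * (starRingEnd ℂ) lam^B := by
      intro A hA
      symm
      apply Finset.sum_subset (Finset.range_subset_range.2 (by omega : q+1 ≤ K))
      intro B hB hB'
      rw [Finset.mem_range] at hB hB'
      rw [hc']
      simp only
      rw [if_neg (by omega)]
      ring
    rw [houter, Finset.sum_congr rfl hinner, ← hG0 lam, h3 lam]
    refine Finset.sum_congr rfl fun A hA => Finset.sum_congr rfl fun B hB => ?_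
    rw [Finset.mem_range] at hA hB
    rw [hc']
    simp only
    rw [if_pos (by omega : A ≤ p ∧ B ≤ q)]
    ring
  have hzero := biIndep K c' hGfull
  rcases hbad with hbp | hbq
  · have hmem1 : p - N ∈ range K := Finset.mem_range.2 (by omega)
    have hmem2 : q ∈ range K := Finset.mem_range.2 hq
    have := hzero (p-N) hmem1 q hmem2
    rw [hc'] at this
    simp only at this
    rw [if_pos (by omega : p - N ≤ p ∧ q ≤ q)] at this
    have hPN : p - (p - N) = N := by omega
    rw [hPN, Nat.sub_self, Nat.choose_self, Ssum_of_dvd hN hη N 0 dvd_N_0] at this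
    have hch : ((p.choose (p-N) : ℕ) : ℂ) ≠ 0 :=
      Nat.cast_ne_zero.2 (Nat.choose_pos (by omega : p - N ≤ p)).ne'
    have h2N : ((2*N : ℕ) : ℂ) ≠ 0 := by
      exact_mod_cast Nat.cast_ne_zero.2 (by omega : 2*N ≠ 0)
    have : ((p.choose (p-N) : ℕ) : ℂ) * 1 * ((2*N : ℕ) : ℂ) = 0 := by
      exact_mod_cast this
    simp [hch, h2N] at this
    omega
  · have hmem1 : p ∈ range K := Finset.mem_range.2 hp
    have hmem2 : q - N ∈ range K := Finset.mem_range.2 (by omega)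
    have := hzero p hmem1 (q-N) hmem2
    rw [hc'] at this
    simp only at this
    rw [if_pos (by omega : p ≤ p ∧ q - N ≤ q)] at this
    have hQN : q - (q - N) = N := by omega
    rw [hQN, Nat.sub_self, Nat.choose_self, Ssum_of_dvd hN hη 0 N (dvd_0_N hN)] at this
    have hch : ((q.choose (q-N) : ℕ) : ℂ) ≠ 0 :=
      Nat.cast_ne_zero.2 (Nat.choose_pos (by omega : q - N ≤ q)).ne'
    have h2N : ((2*N : ℕ) : ℂ) ≠ 0 := by
      exact_mod_cast Nat.cast_ne_zero.2 (by omega : 2*N ≠ 0)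
    have : (1:ℂ) * ((q.choose (q-N) : ℕ) : ℂ) * ((2*N : ℕ) : ℂ) = 0 := by
      exact_mod_cast this
    simp [hch, h2N] at this
    omega


end HarukiProof

open Finset HarukiProof in
/-- A continuous `f : ℂ → ℂ` satisfies the Haruki functional equation (for a primitive
`2N`-th root of unity `η`) if and only if `f(z) = ∑_{i,j=0}^{N-1} a_{i,j} z^i conj(z)^j`. -/
theorem haruki_continuous_solutions (N : ℕ) (hN : 1 ≤ N) (η : ℂ)
    (hη : IsPrimitiveRoot η (2 * N)) (f : ℂ → ℂ) (hf : Continuous f) :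
    (∀ x y : ℂ, ∑ k ∈ Finset.range N, f (x + η ^ (2 * k) * y) =
        ∑ k ∈ Finset.range N, f (x + η ^ (2 * k + 1) * y)) ↔
      ∃ a : Fin N → Fin N → ℂ, ∀ z : ℂ,
        f z = ∑ i : Fin N, ∑ j : Fin N,
          a i j * z ^ (i : ℕ) * (starRingEnd ℂ) z ^ (j : ℕ) := by
  constructor
  · intro heq
    have halt : ∀ x y : ℂ, ∑ m ∈ range (2*N), (-1:ℂ)^m * f (x + η^m*y) = 0 := by
      intro x y
      rw [alternating_eq N η f x y]
      exact sub_eq_zero.2 (heq x y)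
    have hM0 : 0 < 2*N-1 := by omega
    have hmaster : ∀ u : ℂ, Δ_[u] ^[2*N-1] f = 0 := fun u => master hN hη halt u
    obtain ⟨d, hd⟩ := C2 (2*N-1) hM0 f hf hmaster
    obtain ⟨e, he⟩ := span_step (2*N-1) f d hd
    have hzero := F3 hN hη f (2*(2*N-1)) e he halt
    refine ⟨fun i j => e (i:ℕ) (j:ℕ), fun z => ?_⟩
    have hNK : N ≤ 2*(2*N-1) := by omega
    have step1 : f z = ∑ p ∈ range N, ∑ q ∈ range (2*(2*N-1)),
        e p q * z^p * (starRingEnd ℂ) z^q := by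
      rw [he z]
      symm
      apply Finset.sum_subset (Finset.range_subset_range.2 hNK)
      intro p hp hp'
      rw [Finset.mem_range] at hp'
      refine Finset.sum_eq_zero fun q hq => ?_
      rw [hzero p hp q hq (Or.inl (by omega))]
      ring
    have step2 : f z = ∑ p ∈ range N, ∑ q ∈ range N,
        e p q * z^p * (starRingEnd ℂ) z^q := by
      rw [step1]
      refine Finset.sum_congr rfl fun p hp => ?_
      symm
      apply Finset.sum_subset (Finset.range_subset_range.2 hNK)
      intro q hq hq'
      rw [Finset.mem_range] at hq'
      rw [hzero p (Finset.mem_range.2 (by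
        rw [Finset.mem_range] at hp
        omega)) q hq (Or.inr (by omega))]
      ring
    rw [step2]
    simp only [Finset.sum_range]
  · rintro ⟨a, ha⟩ x y
    have h := reverse_alt hN hη f a ha x y
    rw [alternating_eq N η f x y] at h
    exact sub_eq_zero.mp h
end

section
/- Let N ≥ 1 and let η ∈ ℂ be a primitive 2N-th root of unity. An entire function f : ℂ → ℂ (i.e., f is complex-differentiable on all of ℂ) satisfies the Haruki functional equation ∑_{k=0}^{N-1} f(x + η^{2k}y) = ∑_{k=0}^{N-1} f(x + η^{2k+1}y) for all x,y ∈ ℂ if and only if f is a complex polynomial of degree at most N-1, i.e., there exist a_0,…,a_{N-1} ∈ ℂ with f(z) = a_0 + a_1 z + ⋯ + a_{N-1} z^{N-1} for all z ∈ ℂ. -/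
open Finset

private lemma iteratedDeriv_finset_sum {ι : Type*} (s : Finset ι) (g : ι → ℂ → ℂ) (n : ℕ)
    (h : ∀ j ∈ s, ContDiff ℂ n (g j)) (y : ℂ) :
    iteratedDeriv n (fun y => ∑ j ∈ s, g j y) y = ∑ j ∈ s, iteratedDeriv n (g j) y := by
  simp only [iteratedDeriv_eq_iteratedFDeriv]
  rw [show (fun y => ∑ j ∈ s, g j y) = (∑ j ∈ s, g j ·) from rfl, iteratedFDeriv_sum h]
  simp

private lemma iteratedDeriv_comp_affine (f : ℂ → ℂ) (hf : Differentiable ℂ f) (x c : ℂ)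
    (n : ℕ) : iteratedDeriv n (fun y => f (x + c * y)) 0 = c ^ n * iteratedDeriv n f x := by
  have hg : ContDiff ℂ n (fun t => f (x + t)) :=
    (hf.comp (differentiable_id.const_add x)).contDiff
  have h1 := iteratedDeriv_comp_const_mul hg c
  have h2 := iteratedDeriv_comp_const_add n f x
  have : iteratedDeriv n (fun y => f (x + c * y)) 0
      = c ^ n * iteratedDeriv n (fun t => f (x + t)) (c * 0) := by
    exact congrFun h1 0
  rw [this, h2]
  simp

private lemma poly_of_iteratedDeriv_eq_zero :
    ∀ (n : ℕ) (g : ℂ → ℂ), Differentiable ℂ g → (∀ z, iteratedDeriv n g z = 0) →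
      ∃ a : Fin n → ℂ, ∀ z, g z = ∑ i : Fin n, a i * z ^ (i : ℕ) := by
  intro n
  induction n with
  | zero =>
    intro g _ h0
    refine ⟨Fin.elim0, fun z => ?_⟩
    have := h0 z
    rw [iteratedDeriv_zero] at this
    simp [this]
  | succ n IH =>
    intro g hg h0
    have hg' : Differentiable ℂ (deriv g) :=
      (contDiff_infty_iff_deriv.mp hg.contDiff).2.differentiable (by simp)
    have h0' : ∀ z, iteratedDeriv n (deriv g) z = 0 := by
      intro z
      rw [← iteratedDeriv_succ']
      exact h0 z
    obtain ⟨b, hb⟩ := IH (deriv g) hg' h0'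
    set G : ℂ → ℂ := fun z => ∑ i : Fin n, b i / ((i : ℕ) + 1 : ℂ) * z ^ ((i : ℕ) + 1) with hGdef
    have hGd : ∀ z, HasDerivAt G (deriv g z) z := by
      intro z
      rw [hb z]
      have key : ∀ i : Fin n,
          HasDerivAt (fun z : ℂ => b i / ((i : ℕ) + 1 : ℂ) * z ^ ((i : ℕ) + 1))
            (b i * z ^ (i : ℕ)) z := by
        intro i
        have h1 : HasDerivAt (fun z : ℂ => z ^ ((i : ℕ) + 1))
            ((((i : ℕ) : ℂ) + 1) * z ^ (i : ℕ)) z := by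
          simpa using hasDerivAt_pow ((i : ℕ) + 1) z
        have h2 := h1.const_mul (b i / (((i : ℕ) : ℂ) + 1))
        have hne : (((i : ℕ) : ℂ) + 1) ≠ 0 := Nat.cast_add_one_ne_zero _
        refine h2.congr_deriv ?_
        rw [← mul_assoc, div_mul_cancel₀ _ hne]
      simpa using HasDerivAt.fun_sum (fun i (_ : i ∈ Finset.univ) => key i)
    have hGdiff : Differentiable ℂ G := fun z => (hGd z).differentiableAt
    have hsub : ∀ z : ℂ, g z - G z = g 0 - G 0 := by
      intro z
      refine is_const_of_deriv_eq_zero (hg.sub hGdiff) (fun w => ?_) z 0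
      rw [deriv_sub (hg w) (hGd w).differentiableAt, (hGd w).deriv, sub_self]
    have hG0 : G 0 = 0 := by
      simp [hGdef]
    refine ⟨Fin.cases (g 0) (fun i => b i / ((i : ℕ) + 1 : ℂ)), fun z => ?_⟩
    have hgz : g z = g 0 + G z := by
      have := hsub z
      rw [hG0, sub_zero] at this
      linear_combination this
    rw [hgz, Fin.sum_univ_succ]
    simp only [Fin.cases_zero, Fin.cases_succ, Fin.val_zero, pow_zero, mul_one, Fin.val_succ, hGdef]

/-- An entire function `f : ℂ → ℂ` satisfies the Haruki functional equation (for a primitive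
`2N`-th root of unity `η`) if and only if `f` is a polynomial of degree at most `N - 1`. -/
theorem haruki_entire_solutions (N : ℕ) (hN : 1 ≤ N) (η : ℂ)
    (hη : IsPrimitiveRoot η (2 * N)) (f : ℂ → ℂ) (hf : Differentiable ℂ f) :
    (∀ x y : ℂ, ∑ k ∈ Finset.range N, f (x + η ^ (2 * k) * y) =
        ∑ k ∈ Finset.range N, f (x + η ^ (2 * k + 1) * y)) ↔
      ∃ a : Fin N → ℂ, ∀ z : ℂ, f z = ∑ i : Fin N, a i * z ^ (i : ℕ) := by
  have hNpos : 0 < N := hN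
  have h2N : 0 < 2 * N := by omega
  have hunit : η ^ (2 * N) = 1 := hη.pow_eq_one
  have hη2 : IsPrimitiveRoot (η ^ 2) N := hη.pow h2N rfl
  have hηN : η ^ N = -1 := by
    have hsq : (η ^ N) ^ 2 = 1 := by
      rw [← pow_mul, mul_comm]; exact hunit
    have hne : η ^ N ≠ 1 := hη.pow_ne_one_of_pos_of_lt hNpos.ne' (by omega)
    have : (η ^ N - 1) * (η ^ N + 1) = 0 := by ring_nf; linear_combination hsq
    rcases mul_eq_zero.mp this with h | h
    · exact absurd (by linear_combination h) hne
    · linear_combination h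
  -- key geometric sum
  have key : ∀ m : ℕ, 0 < m → m < N → ∑ k ∈ Finset.range N, ((η ^ 2) ^ m) ^ k = 0 := by
    intro m hm hmN
    have hne : (η ^ 2) ^ m ≠ 1 := hη2.pow_ne_one_of_pos_of_lt hm.ne' hmN
    have hp : ((η ^ 2) ^ m) ^ N = 1 := by
      rw [← pow_mul, ← pow_mul, show 2 * (m * N) = 2 * N * m by ring, pow_mul, hunit, one_pow]
    rw [geom_sum_eq hne, hp, sub_self, zero_div]
  -- even/odd power sum equality
  have evenodd : ∀ m : ℕ, m < N →
      ∑ k ∈ Finset.range N, (η ^ (2 * k)) ^ m = ∑ k ∈ Finset.range N, (η ^ (2 * k + 1)) ^ m := by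
    intro m hmN
    rcases Nat.eq_zero_or_pos m with rfl | hm
    · simp
    · have h0 : ∑ k ∈ Finset.range N, ((η ^ 2) ^ m) ^ k = 0 := key m hm hmN
      have hL : ∑ k ∈ Finset.range N, (η ^ (2 * k)) ^ m = 0 := by
        rw [← h0]
        refine Finset.sum_congr rfl fun k _ => ?_
        rw [← pow_mul, ← pow_mul, ← pow_mul]
        ring_nf
      have hR : ∑ k ∈ Finset.range N, (η ^ (2 * k + 1)) ^ m = 0 := by
        have : ∀ k, (η ^ (2 * k + 1)) ^ m = η ^ m * ((η ^ 2) ^ m) ^ k := by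
          intro k
          rw [← pow_mul, ← pow_mul, ← pow_mul, ← pow_add]
          ring_nf
        simp_rw [this, ← Finset.mul_sum, h0, mul_zero]
      rw [hL, hR]
  constructor
  · -- forward direction
    intro h
    have hF0 : ∀ x : ℂ, iteratedDeriv N f x = 0 := by
      intro x
      have heq : (fun y => ∑ k ∈ Finset.range N, f (x + η ^ (2 * k) * y))
          = fun y => ∑ k ∈ Finset.range N, f (x + η ^ (2 * k + 1) * y) := funext (h x)
      have hcd : ∀ (c : ℂ), ContDiff ℂ N (fun y => f (x + c * y)) :=
        fun c => (hf.comp ((differentiable_id.const_mul c).const_add x)).contDiff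
      have hL := iteratedDeriv_finset_sum (Finset.range N)
        (fun k y => f (x + η ^ (2 * k) * y)) N (fun k _ => hcd _) 0
      have hR := iteratedDeriv_finset_sum (Finset.range N)
        (fun k y => f (x + η ^ (2 * k + 1) * y)) N (fun k _ => hcd _) 0
      have hLR : ∑ k ∈ Finset.range N, iteratedDeriv N (fun y => f (x + η ^ (2 * k) * y)) 0
          = ∑ k ∈ Finset.range N, iteratedDeriv N (fun y => f (x + η ^ (2 * k + 1) * y)) 0 := by
        rw [← hL, ← hR, heq]
      have hck : ∀ c : ℂ, iteratedDeriv N (fun y => f (x + c * y)) 0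
          = c ^ N * iteratedDeriv N f x := fun c => iteratedDeriv_comp_affine f hf x c N
      simp only [hck] at hLR
      have he : ∀ k : ℕ, (η ^ (2 * k)) ^ N = 1 := by
        intro k
        rw [← pow_mul, show 2 * k * N = 2 * N * k by ring, pow_mul, hunit, one_pow]
      have ho : ∀ k : ℕ, (η ^ (2 * k + 1)) ^ N = -1 := by
        intro k
        rw [← pow_mul, show (2 * k + 1) * N = 2 * N * k + N by ring, pow_add, pow_mul, hunit,
          one_pow, one_mul, hηN]
      simp only [he, ho, one_mul, neg_one_mul, Finset.sum_const, Finset.card_range] at hLR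
      simp only [nsmul_eq_mul] at hLR
      have hN0 : (N : ℂ) ≠ 0 := Nat.cast_ne_zero.mpr hNpos.ne'
      have h2 : (N : ℂ) * (2 * iteratedDeriv N f x) = 0 := by linear_combination hLR
      rcases mul_eq_zero.mp h2 with hc | hc
      · exact absurd hc hN0
      · rcases mul_eq_zero.mp hc with hc' | hc'
        · norm_num at hc'
        · exact hc'
    exact poly_of_iteratedDeriv_eq_zero N f hf hF0
  · -- backward direction
    rintro ⟨a, ha⟩ x y
    have claim : ∀ i : ℕ, i < N →
        ∑ k ∈ Finset.range N, (x + η ^ (2 * k) * y) ^ i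
          = ∑ k ∈ Finset.range N, (x + η ^ (2 * k + 1) * y) ^ i := by
      intro i hi
      have expand : ∀ c : ℂ, (x + c * y) ^ i
          = ∑ j ∈ Finset.range (i + 1), x ^ j * c ^ (i - j) * y ^ (i - j) * (i.choose j) := by
        intro c
        rw [add_pow]
        refine Finset.sum_congr rfl fun j _ => ?_
        rw [mul_pow]
        ring
      simp_rw [expand]
      rw [Finset.sum_comm, Finset.sum_comm (s := Finset.range N)]
      refine Finset.sum_congr rfl fun j hj => ?_
      have hij : i - j < N := lt_of_le_of_lt (Nat.sub_le i j) hi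
      calc ∑ k ∈ Finset.range N, x ^ j * (η ^ (2 * k)) ^ (i - j) * y ^ (i - j) * (i.choose j)
          = (x ^ j * y ^ (i - j) * (i.choose j)) *
              ∑ k ∈ Finset.range N, (η ^ (2 * k)) ^ (i - j) := by
            rw [Finset.mul_sum]; refine Finset.sum_congr rfl fun k _ => by ring
        _ = (x ^ j * y ^ (i - j) * (i.choose j)) *
              ∑ k ∈ Finset.range N, (η ^ (2 * k + 1)) ^ (i - j) := by rw [evenodd _ hij]
        _ = ∑ k ∈ Finset.range N, x ^ j * (η ^ (2 * k + 1)) ^ (i - j) * y ^ (i - j)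
              * (i.choose j) := by
            rw [Finset.mul_sum]; refine Finset.sum_congr rfl fun k _ => by ring
    simp_rw [ha]
    rw [Finset.sum_comm, Finset.sum_comm (s := Finset.range N)]
    refine Finset.sum_congr rfl fun i _ => ?_
    simp_rw [← Finset.mul_sum]
    rw [claim (i : ℕ) i.isLt]
end

section
/- Let N ≥ 1 and let θ ∈ ℂ be a primitive N-th root of unity. An entire function f : ℂ → ℂ (i.e., f is complex-differentiable on all of ℂ) satisfies the Kakutani–Nagumo–Walsh functional equation (1/N)∑_{k=0}^{N-1} f(x + θ^k y) = f(x) for all x,y ∈ ℂ if and only if f is a complex polynomial of degree at most N-1, i.e., there exist a_0,…,a_{N-1} ∈ ℂ with f(z) = a_0 + a_1 z + ⋯ + a_{N-1} z^{N-1} for all z ∈ ℂ. -/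
open Finset

/-- Differentiating a sum-identity that is constant in `y`. -/
lemma knw_aux (N m : ℕ) (θ : ℂ) (g : ℂ → ℂ) (hg : Differentiable ℂ g) (x c : ℂ)
    (hconst : ∀ y : ℂ, ∑ k ∈ Finset.range N, θ ^ (k * m) * g (x + θ ^ k * y) = c) (y : ℂ) :
    ∑ k ∈ Finset.range N, θ ^ (k * (m + 1)) * deriv g (x + θ ^ k * y) = 0 := by
  have H : HasDerivAt (fun y => ∑ k ∈ Finset.range N, θ ^ (k * m) * g (x + θ ^ k * y))
      (∑ k ∈ Finset.range N, θ ^ (k * (m + 1)) * deriv g (x + θ ^ k * y)) y := by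
    apply HasDerivAt.fun_sum
    intro k _
    have h1 : HasDerivAt (fun y : ℂ => x + θ ^ k * y) (θ ^ k) y := by
      simpa using ((hasDerivAt_id y).const_mul (θ ^ k)).const_add x
    have h2 := (hg.differentiableAt.hasDerivAt).comp y h1
    have h3 := h2.const_mul (θ ^ (k * m))
    refine h3.congr_deriv ?_
    rw [show k * (m + 1) = k * m + k by ring, pow_add]
    ring
  have h0 : HasDerivAt (fun y : ℂ => ∑ k ∈ Finset.range N, θ ^ (k * m) * g (x + θ ^ k * y)) 0 y := by
    have : (fun y : ℂ => ∑ k ∈ Finset.range N, θ ^ (k * m) * g (x + θ ^ k * y)) = fun _ => c :=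
      funext hconst
    rw [this]
    exact hasDerivAt_const y c
  exact H.unique h0

/-- An entire function `f : ℂ → ℂ` satisfies the Kakutani–Nagumo–Walsh functional equation
(for a primitive `N`-th root of unity `θ`) if and only if `f` is a polynomial of degree
at most `N - 1`. -/
theorem knw_entire_solutions (N : ℕ) (hN : 1 ≤ N) (θ : ℂ)
    (hθ : IsPrimitiveRoot θ N) (f : ℂ → ℂ) (hf : Differentiable ℂ f) :
    (∀ x y : ℂ, (N : ℂ)⁻¹ * ∑ k ∈ Finset.range N, f (x + θ ^ k * y) = f x) ↔
      ∃ a : Fin N → ℂ, ∀ z : ℂ, f z = ∑ i : Fin N, a i * z ^ (i : ℕ) := by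
  have hN0 : (N : ℂ) ≠ 0 := Nat.cast_ne_zero.mpr (by omega)
  constructor
  · intro h
    have hc : ContDiff ℂ ⊤ f := hf.contDiff
    have hD : ∀ n : ℕ, Differentiable ℂ (iteratedDeriv n f) := fun n =>
      hc.differentiable_iteratedDeriv n (by exact_mod_cast lt_top_iff_ne_top.2 (by simp))
    -- key derivative identities
    have key : ∀ m : ℕ, ∀ x y : ℂ,
        ∑ k ∈ Finset.range N, θ ^ (k * (m + 1)) * iteratedDeriv (m + 1) f (x + θ ^ k * y) = 0 := by
      intro m
      induction m with
      | zero =>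
        intro x y
        have hconst : ∀ y : ℂ, ∑ k ∈ Finset.range N, θ ^ (k * 0) * f (x + θ ^ k * y)
            = (N : ℂ) * f x := by
          intro y
          have := h x y
          field_simp at this
          simpa [mul_comm] using this
        have := knw_aux N 0 θ f hf x ((N : ℂ) * f x) hconst y
        simpa [iteratedDeriv_one] using this
      | succ m ih =>
        intro x y
        have hconst : ∀ y : ℂ, ∑ k ∈ Finset.range N,
            θ ^ (k * (m + 1)) * iteratedDeriv (m + 1) f (x + θ ^ k * y) = 0 := ih x
        have := knw_aux N (m + 1) θ (iteratedDeriv (m + 1) f) (hD (m + 1)) x 0 hconst y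
        simpa [← iteratedDeriv_succ] using this
    -- conclude iteratedDeriv N f = 0
    have hNth : ∀ x : ℂ, iteratedDeriv N f x = 0 := by
      intro x
      have := key (N - 1) x 0
      have hNN : N - 1 + 1 = N := by omega
      rw [hNN] at this
      have hθN : ∀ k : ℕ, θ ^ (k * N) = 1 := by
        intro k
        rw [mul_comm, pow_mul, hθ.pow_eq_one, one_pow]
      simp only [hθN, one_mul, mul_zero, add_zero, Finset.sum_const, Finset.card_range,
        nsmul_eq_mul] at this
      exact (mul_eq_zero.mp this).resolve_left hN0
    have hhigh : ∀ n : ℕ, N ≤ n → ∀ x : ℂ, iteratedDeriv n f x = 0 := by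
      intro n hn
      induction n, hn using Nat.le_induction with
      | base => exact hNth
      | succ n hn ih =>
        intro x
        have hz : iteratedDeriv n f = fun _ => (0 : ℂ) := funext ih
        rw [iteratedDeriv_succ, hz]
        simp
    refine ⟨fun i => ((Nat.factorial (i : ℕ) : ℕ) : ℂ)⁻¹ * iteratedDeriv (i : ℕ) f 0, fun z => ?_⟩
    have ht := Complex.taylorSeries_eq_of_entire' (c := 0) (z := z) hf
    rw [← ht]
    rw [tsum_eq_sum (s := Finset.range N) (f := fun n =>
        ((Nat.factorial n : ℕ) : ℂ)⁻¹ * iteratedDeriv n f 0 * (z - 0) ^ n)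
      (fun n hn => by
        show ((Nat.factorial n : ℕ) : ℂ)⁻¹ * iteratedDeriv n f 0 * (z - 0) ^ n = 0
        rw [hhigh n (by simpa using hn) 0]
        ring)]
    rw [← Fin.sum_univ_eq_sum_range (fun n => ((Nat.factorial n : ℕ) : ℂ)⁻¹ * iteratedDeriv n f 0 * (z - 0) ^ n) N]
    simp [mul_assoc]
  · rintro ⟨a, ha⟩ x y
    have hgeom : ∀ m : ℕ, 0 < m → m < N → ∑ k ∈ Finset.range N, (θ ^ m) ^ k = 0 := by
      intro m h1 h2
      have hz1 : θ ^ m ≠ 1 := hθ.pow_ne_one_of_pos_of_lt h1.ne' h2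
      rw [geom_sum_eq hz1]
      have : (θ ^ m) ^ N = 1 := by
        rw [← pow_mul, mul_comm, pow_mul, hθ.pow_eq_one, one_pow]
      simp [this]
    have scl : ∀ i : ℕ, i < N → ∑ k ∈ Finset.range N, (x + θ ^ k * y) ^ i = (N : ℂ) * x ^ i := by
      intro i hi
      have expand : ∀ k : ℕ, (x + θ ^ k * y) ^ i
          = ∑ j ∈ Finset.range (i + 1),
              x ^ j * y ^ (i - j) * (i.choose j : ℂ) * (θ ^ (i - j)) ^ k := by
        intro k
        rw [add_pow]
        refine Finset.sum_congr rfl fun j _ => ?_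
        rw [mul_pow, ← pow_mul, mul_comm k (i - j), pow_mul]
        ring
      simp only [expand]
      rw [Finset.sum_comm]
      have step : ∀ j ∈ Finset.range (i + 1),
          ∑ k ∈ Finset.range N, x ^ j * y ^ (i - j) * (i.choose j : ℂ) * (θ ^ (i - j)) ^ k
            = if j = i then (N : ℂ) * x ^ i else 0 := by
        intro j hj
        rw [← Finset.mul_sum]
        by_cases hji : j = i
        · subst hji
          simp [Finset.card_range, mul_comm]
        · have hj' : j < i + 1 := Finset.mem_range.mp hj
          have h1 : 0 < i - j := by omega
          have h2 : i - j < N := by omega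
          rw [hgeom (i - j) h1 h2, mul_zero]
          simp [hji]
      rw [Finset.sum_congr rfl step]
      simp
    have hsum : ∑ k ∈ Finset.range N, f (x + θ ^ k * y) = (N : ℂ) * f x := by
      calc ∑ k ∈ Finset.range N, f (x + θ ^ k * y)
          = ∑ k ∈ Finset.range N, ∑ i : Fin N, a i * (x + θ ^ k * y) ^ (i : ℕ) := by
            simp only [ha]
        _ = ∑ i : Fin N, ∑ k ∈ Finset.range N, a i * (x + θ ^ k * y) ^ (i : ℕ) :=
            Finset.sum_comm
        _ = ∑ i : Fin N, a i * ((N : ℂ) * x ^ (i : ℕ)) := by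
            refine Finset.sum_congr rfl fun i _ => ?_
            rw [← Finset.mul_sum, scl (i : ℕ) i.2]
        _ = (N : ℂ) * ∑ i : Fin N, a i * x ^ (i : ℕ) := by
            rw [Finset.mul_sum]
            exact Finset.sum_congr rfl fun i _ => by ring
        _ = (N : ℂ) * f x := by rw [ha]
    rw [hsum, ← mul_assoc, inv_mul_cancel₀ hN0, one_mul]
end

section
/- Let d ≥ 1 and N ≥ 1. A continuous function f : ℝ^d → ℝ satisfies Fréchet's functional equation with fixed step, Δ_h^N f(x) = ∑_{k=0}^{N} binom(N,k)(−1)^{N−k} f(x+kh) = 0 for all x,h ∈ ℝ^d, if and only if f is (the function associated to) a real polynomial in d variables of total degree at most N−1. -/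
open Finset Polynomial Function
open scoped fwdDiff

namespace Frechet

/-- Transfer iterated forward differences along a map compatible with the steps. -/
lemma fwdDiff_iter_comp {M M' : Type*} [AddCommMonoid M] [AddCommMonoid M']
    (φ : M → M') (h : M) (h' : M') (hφ : ∀ x, φ (x + h) = φ x + h')
    (f : M' → ℝ) (n : ℕ) (x : M) :
    (fwdDiff h)^[n] (fun y => f (φ y)) x = (fwdDiff h')^[n] f (φ x) := by
  induction n generalizing f with
  | zero => simp
  | succ n IH =>
    rw [iterate_succ_apply, iterate_succ_apply]
    have : fwdDiff h (fun y => f (φ y)) = fun y => (fwdDiff h' f) (φ y) := by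
      funext y; simp [fwdDiff, hφ]
    rw [this, IH]

lemma fwdDiff_iter_zero_fun {M : Type*} [AddCommMonoid M] (h : M) (n : ℕ) :
    (fwdDiff h)^[n] (fun _ : M => (0:ℝ)) = fun _ => 0 := by
  induction n with
  | zero => simp
  | succ n IH => rw [iterate_succ_apply]; simpa [fwdDiff] using IH

/-- The statement's alternating sum equals the iterated forward difference. -/
lemma sum_eq_iter {M : Type*} [AddCommMonoid M] (N : ℕ) (g : M → ℝ) (x h : M) :
    ∑ k ∈ Finset.range (N + 1), (N.choose k : ℝ) * (-1) ^ (N - k) * g (x + k • h)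
      = (fwdDiff h)^[N] g x := by
  rw [fwdDiff_iter_eq_sum_shift]
  refine Finset.sum_congr rfl fun k _ => ?_
  rw [zsmul_eq_mul]
  push_cast
  ring

/-- Forward difference of a polynomial function, as a polynomial. -/
lemma fwdDiff_polyeval (s : ℝ[X]) (h : ℝ) :
    fwdDiff h (fun t => s.eval t) = fun t => (s.comp (X + C h) - s).eval t := by
  funext t
  simp [fwdDiff, eval_comp]

lemma comp_sub_degree_lt (s : ℝ[X]) (h : ℝ) :
    s.comp (X + C h) - s = 0 ∨ (s.comp (X + C h) - s).natDegree < s.natDegree := by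
  rcases Nat.eq_zero_or_pos s.natDegree with h0 | hpos
  · left
    obtain ⟨a, rfl⟩ := natDegree_eq_zero.mp h0
    simp
  · set D := s.comp (X + C h) - s with hD
    rcases eq_or_ne D 0 with hd0 | hd0
    · exact Or.inl hd0
    right
    have hq : natDegree (X + C h) = 1 := natDegree_X_add_C h
    have hcomp_le : (s.comp (X + C h)).natDegree ≤ s.natDegree := by
      have := natDegree_comp_le (p := s) (q := X + C h)
      rwa [hq, mul_one] at this
    have hD_le : D.natDegree ≤ s.natDegree :=
      le_trans (natDegree_sub_le _ _) (by simp [hcomp_le])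
    have hcoeff : D.coeff s.natDegree = 0 := by
      have h1 : (s.comp (X + C h)).coeff (s.natDegree * (X + C h).natDegree)
          = s.leadingCoeff * (X + C h).leadingCoeff ^ s.natDegree :=
        coeff_comp_degree_mul_degree (by omega)
      have hm : (X + C h).leadingCoeff = 1 := (monic_X_add_C h).leadingCoeff
      rw [hq, mul_one, hm, one_pow] at h1
      rw [hD, coeff_sub, h1, leadingCoeff]; ring
    rcases lt_or_eq_of_le hD_le with hlt | heq
    · exact hlt
    · exact absurd (heq ▸ hcoeff) (by simpa [leadingCoeff, heq] using leadingCoeff_ne_zero.mpr hd0)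

/-- The `N`-th forward difference annihilates polynomial functions of degree `< N`. -/
lemma iter_polyeval_zero (h : ℝ) : ∀ (N : ℕ) (s : ℝ[X]), s.natDegree < N →
    (fwdDiff h)^[N] (fun t => s.eval t) = fun _ => 0 := by
  intro N
  induction N with
  | zero => intro s hs; omega
  | succ N IH =>
    intro s hs
    rw [iterate_succ_apply, fwdDiff_polyeval]
    rcases comp_sub_degree_lt s h with h0 | hlt
    · rcases Nat.eq_zero_or_pos N with rfl | hN
      · funext t; simp [h0]
      · rw [h0]
        simpa using IH 0 (by simpa using hN)
    · exact IH _ (by omega)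

/-- Evaluating a one-variable specialization of a multivariate polynomial. -/
lemma eval_aeval {d : ℕ} (φ : Fin d → ℝ[X]) (t : ℝ) (p : MvPolynomial (Fin d) ℝ) :
    Polynomial.eval t (MvPolynomial.aeval φ p)
      = MvPolynomial.eval (fun i => (φ i).eval t) p := by
  induction p using MvPolynomial.induction_on with
  | C a => simp
  | add p q hp hq => simp [hp, hq]
  | mul_X p i hp => simp [hp]

/-- Degree bound for substituting linear polynomials. -/
lemma natDegree_aeval_le {d : ℕ} (φ : Fin d → ℝ[X]) (hφ : ∀ i, (φ i).natDegree ≤ 1)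
    (p : MvPolynomial (Fin d) ℝ) :
    (MvPolynomial.aeval φ p).natDegree ≤ p.totalDegree := by
  conv_lhs => rw [p.as_sum]
  rw [map_sum]
  refine natDegree_sum_le_of_forall_le _ _ fun μ hμ => ?_
  rw [MvPolynomial.aeval_monomial]
  refine le_trans (natDegree_mul_le) ?_
  have h1 : (algebraMap ℝ ℝ[X] (MvPolynomial.coeff μ p)).natDegree = 0 := natDegree_C _
  rw [h1, zero_add]
  refine le_trans (natDegree_prod_le _ _) (le_trans ?_ (MvPolynomial.le_totalDegree hμ))
  have : (μ.sum fun _ e => e) = ∑ i ∈ μ.support, μ i := rfl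
  rw [this]
  refine Finset.sum_le_sum fun i _ => ?_
  exact le_trans natDegree_pow_le (by simpa using Nat.mul_le_mul_left (μ i) (hφ i))


/-- Newton's forward-difference formula: a sequence whose `N`-th differences vanish
is given by a polynomial of degree `≤ N - 1`. -/
lemma newton (N : ℕ) (v : ℕ → ℝ) (hv : ∀ j : ℕ, (fwdDiff (1:ℕ))^[N] v j = 0) :
    ∃ P : ℝ[X], P.natDegree ≤ N - 1 ∧ ∀ j : ℕ, v j = P.eval (j : ℝ) := by
  have h0 : (fwdDiff (1:ℕ))^[N] v = fun _ => 0 := funext hv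
  have hhigh : ∀ k, N ≤ k → (fwdDiff (1:ℕ))^[k] v 0 = 0 := by
    intro k hk
    obtain ⟨m, rfl⟩ := Nat.exists_eq_add_of_le hk
    rw [add_comm, iterate_add_apply, h0, fwdDiff_iter_zero_fun]
  refine ⟨∑ k ∈ range N,
      Polynomial.C ((fwdDiff (1:ℕ))^[k] v 0 * ((k.factorial : ℝ))⁻¹) * descPochhammer ℝ k,
      ?_, ?_⟩
  · refine natDegree_sum_le_of_forall_le _ _ fun k hk => ?_
    refine le_trans natDegree_mul_le ?_
    rw [natDegree_C, zero_add, descPochhammer_natDegree]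
    exact Nat.le_pred_of_lt (mem_range.mp hk)
  · intro j
    have h1 : v j = ∑ k ∈ range (j+1), (j.choose k : ℝ) * (fwdDiff (1:ℕ))^[k] v 0 := by
      have := shift_eq_sum_fwdDiff_iter (1:ℕ) v j 0
      simpa [nsmul_eq_mul, mul_comm] using this
    have e1 : ∑ k ∈ range (j+1), (j.choose k : ℝ) * (fwdDiff (1:ℕ))^[k] v 0
        = ∑ k ∈ range (j+1+N), (j.choose k : ℝ) * (fwdDiff (1:ℕ))^[k] v 0 := by
      refine Finset.sum_subset (Finset.range_subset_range.mpr (by omega)) fun k _ hk => ?_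
      have hjk : j < k := by simpa using hk
      rw [Nat.choose_eq_zero_of_lt hjk]
      simp
    have e2 : ∑ k ∈ range N, (j.choose k : ℝ) * (fwdDiff (1:ℕ))^[k] v 0
        = ∑ k ∈ range (j+1+N), (j.choose k : ℝ) * (fwdDiff (1:ℕ))^[k] v 0 := by
      refine Finset.sum_subset (Finset.range_subset_range.mpr (by omega)) fun k _ hk => ?_
      rw [hhigh k (by simpa using hk), mul_zero]
    rw [h1, e1, ← e2, eval_finset_sum]
    refine Finset.sum_congr rfl fun k _ => ?_
    rw [eval_mul, eval_C, descPochhammer_eval_eq_descFactorial,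
      Nat.descFactorial_eq_factorial_mul_choose]
    have hfac : (k.factorial : ℝ) ≠ 0 := Nat.cast_ne_zero.mpr k.factorial_ne_zero
    push_cast
    field_simp

/-- **1-D Fréchet theorem**: a continuous solution of the fixed-step Fréchet equation on `ℝ`
is a polynomial of degree `≤ N - 1`. -/
lemma oneDim (N : ℕ) (hN : 1 ≤ N) (g : ℝ → ℝ) (hg : Continuous g)
    (heq : ∀ x h : ℝ, (fwdDiff h)^[N] g x = 0) :
    ∃ q : ℝ[X], q.natDegree ≤ N - 1 ∧ ∀ t, g t = q.eval t := by
  have hinj : Set.InjOn (fun n : ℕ => (n:ℝ)) (range N) :=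
    fun a _ b _ hab => Nat.cast_injective hab
  set q : ℝ[X] := Lagrange.interpolate (range N) (fun n : ℕ => (n:ℝ)) (fun n => g n) with hq
  have hdeg : q.degree < (N : WithBot ℕ) := by
    have h := Lagrange.degree_interpolate_lt (fun n : ℕ => g (n:ℝ)) hinj
    rw [card_range] at h
    exact h
  have hqnat : q.natDegree < N := by
    rcases eq_or_ne q 0 with h0 | h0
    · rw [h0]; simpa using (by omega : 0 < N)
    · exact (Polynomial.natDegree_lt_iff_degree_lt h0).mpr hdeg
  set u : ℝ → ℝ := fun t => g t - q.eval t with hu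
  have hueq : ∀ x h : ℝ, (fwdDiff h)^[N] u x = 0 := by
    intro x h
    have hsplit : g = u + fun t => q.eval t := by funext t; simp [hu]
    have := heq x h
    rw [hsplit, fwdDiff_iter_add, iter_polyeval_zero h N q hqnat] at this
    simpa using this
  have hnodes : ∀ n : ℕ, n ∈ range N → u (n:ℝ) = 0 := by
    intro n hn
    have := Lagrange.eval_interpolate_at_node (fun n : ℕ => g (n:ℝ)) hinj hn
    simp only [hu, ← hq]
    rw [this]
    ring
  -- values on arithmetic progressions are given by polynomials of degree < N
  have hgrid : ∀ a s : ℝ, ∃ P : ℝ[X], P.natDegree ≤ N - 1 ∧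
      ∀ j : ℕ, u (a + j * s) = P.eval (j:ℝ) := by
    intro a s
    refine newton N _ (fun j => ?_)
    have hcomp := fwdDiff_iter_comp (fun j : ℕ => a + (j:ℝ) * s) 1 s
      (fun x => by push_cast; ring) u N j
    rw [hcomp, hueq]
  -- if u vanishes at the first N points of a progression, it vanishes on all of it
  have hzero : ∀ a s : ℝ, (∀ n : ℕ, n ∈ range N → u (a + n * s) = 0) →
      ∀ j : ℕ, u (a + j * s) = 0 := by
    intro a s hn j
    obtain ⟨P, hPdeg, hPev⟩ := hgrid a s
    have hP0 : P = 0 := by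
      refine Polynomial.eq_zero_of_natDegree_lt_card_of_eval_eq_zero P
        (f := fun i : Fin N => ((i : ℕ) : ℝ)) ?_ ?_ ?_
      · exact fun i j hij => Fin.ext (Nat.cast_injective hij)
      · intro i
        rw [← hPev i]
        exact hn i (mem_range.mpr i.isLt)
      · simpa using lt_of_le_of_lt hPdeg (by omega)
    rw [hPev j, hP0, eval_zero]
  have hnat : ∀ n : ℕ, u (n:ℝ) = 0 := by
    have := hzero 0 1 (fun n hn => by simpa using hnodes n hn)
    intro n
    simpa using this n
  have hint : ∀ z : ℤ, u (z:ℝ) = 0 := by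
    have hneg : ∀ j : ℕ, u ((N:ℝ) - 1 + j * (-1)) = 0 := by
      refine hzero ((N:ℝ) - 1) (-1) (fun n hn => ?_)
      have hn' : n < N := mem_range.mp hn
      have : (N:ℝ) - 1 + n * (-1) = ((N - 1 - n : ℕ) : ℝ) := by
        have h1 : (1:ℕ) ≤ N := hN
        push_cast [Nat.cast_sub (by omega : n ≤ N - 1), Nat.cast_sub h1]
        ring
      rw [this]
      exact hnat _
    intro z
    rcases le_or_gt 0 z with hz | hz
    · lift z to ℕ using hz
      exact_mod_cast hnat z
    · have hj := hneg (N - 1 + (-z).toNat)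
      have harith : (N:ℝ) - 1 + ((N - 1 + (-z).toNat : ℕ) : ℝ) * (-1) = (z:ℝ) := by
        have h1 : (1:ℕ) ≤ N := hN
        push_cast [Nat.cast_sub h1]
        have : (((-z).toNat : ℝ)) = -(z:ℝ) := by
          have := Int.toNat_of_nonneg (by omega : (0:ℤ) ≤ -z)
          exact_mod_cast congrArg (fun w : ℤ => (w:ℝ)) this
        rw [this]
        ring
      rwa [harith] at hj
  have hrat : ∀ r : ℚ, u (r:ℝ) = 0 := by
    intro r
    set m : ℕ := r.den with hm
    set a : ℤ := r.num with ha
    have hmpos : 0 < m := r.pos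
    obtain ⟨P, hPdeg, hPev⟩ := hgrid ((a:ℝ)/m) (1/m)
    set n₀ : ℕ := a.natAbs with hn₀
    have hJnonneg : ∀ t : ℕ, (0:ℤ) ≤ (m:ℤ) * ((n₀:ℤ) + t) - a := by
      intro t
      have h1 : a ≤ (n₀:ℤ) := Int.le_natAbs
      have h2 : ((n₀:ℤ) + t) ≤ (m:ℤ) * ((n₀:ℤ) + t) :=
        le_mul_of_one_le_left (by positivity) (by exact_mod_cast hmpos)
      omega
    set J : ℕ → ℕ := fun t => ((m:ℤ) * ((n₀:ℤ) + t) - a).toNat with hJ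
    have hJcast : ∀ t : ℕ, ((J t : ℕ) : ℝ) = (m:ℝ) * ((n₀:ℝ) + t) - (a:ℝ) := by
      intro t
      have := Int.toNat_of_nonneg (hJnonneg t)
      have hc := congrArg (fun w : ℤ => (w:ℝ)) this
      push_cast at hc ⊢
      simpa [hJ] using hc
    have hP0 : P = 0 := by
      refine Polynomial.eq_zero_of_natDegree_lt_card_of_eval_eq_zero P
        (f := fun i : Fin N => ((J i : ℕ) : ℝ)) ?_ ?_ ?_
      · intro i j hij
        have hij' : ((J (i:ℕ) : ℕ) : ℝ) = ((J (j:ℕ) : ℕ) : ℝ) := hij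
        rw [hJcast, hJcast] at hij'
        have hm0 : (m:ℝ) ≠ 0 := by positivity
        have : ((i:ℕ):ℝ) = ((j:ℕ):ℝ) := by
          have h2 : (m:ℝ) * (((i:ℕ):ℝ) - ((j:ℕ):ℝ)) = 0 := by linear_combination hij'
          rcases mul_eq_zero.mp h2 with h | h
          · exact absurd h hm0
          · linarith
        exact Fin.ext (Nat.cast_injective this)
      · intro i
        rw [← hPev (J i)]
        have hm0 : (m:ℝ) ≠ 0 := by positivity
        have harith : (a:ℝ)/m + (J i) * (1/m) = ((n₀ + i : ℕ) : ℝ) := by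
          rw [hJcast]
          push_cast
          field_simp
          ring
        rw [harith]
        exact hnat _
      · simpa using lt_of_le_of_lt hPdeg (by omega)
    have := hPev 0
    rw [hP0, eval_zero] at this
    simp only [Nat.cast_zero, zero_mul, add_zero] at this
    rwa [Rat.cast_def]
  have hu0 : u = fun _ => 0 := by
    have hcu : Continuous u := hg.sub q.continuous
    refine Continuous.ext_on Rat.denseRange_cast hcu continuous_const ?_
    rintro _ ⟨r, rfl⟩
    exact hrat r
  refine ⟨q, by omega, fun t => ?_⟩
  have := congrFun hu0 t
  simp only [hu] at this
  linarith [this]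

lemma homogeneousComponent_monomial {d : ℕ} (D : ℕ) (μ : Fin d →₀ ℕ) (c : ℝ) :
    MvPolynomial.homogeneousComponent D (MvPolynomial.monomial μ c)
      = if μ.degree = D then MvPolynomial.monomial μ c else 0 := by
  ext ν
  rw [MvPolynomial.coeff_homogeneousComponent]
  split_ifs with h1 h2 h2
  · rfl
  · rw [MvPolynomial.coeff_monomial, if_neg (fun h => by subst h; exact h2 h1),
      MvPolynomial.coeff_zero]
  · rw [MvPolynomial.coeff_monomial, if_neg (fun h => by subst h; exact h1 h2)]
  · simp

lemma coeff_lineComp {d : ℕ} (v : Fin d → ℝ) (p : MvPolynomial (Fin d) ℝ) (D : ℕ) :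
    (MvPolynomial.aeval (fun i => Polynomial.C (v i) * Polynomial.X) p).coeff D
      = MvPolynomial.eval v (MvPolynomial.homogeneousComponent D p) := by
  conv_lhs => rw [p.as_sum]
  conv_rhs => rw [p.as_sum]
  rw [map_sum, Polynomial.finset_sum_coeff, map_sum, map_sum]
  refine Finset.sum_congr rfl fun μ _ => ?_
  rw [MvPolynomial.aeval_monomial, homogeneousComponent_monomial]
  have hprod : (μ.prod fun i k => (Polynomial.C (v i) * Polynomial.X) ^ k)
      = Polynomial.C (μ.prod fun i k => v i ^ k) * Polynomial.X ^ μ.degree := by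
    rw [Finsupp.prod, Finsupp.prod, Finsupp.degree]
    simp_rw [mul_pow, ← Polynomial.C_pow]
    rw [Finset.prod_mul_distrib, ← map_prod, Finset.prod_pow_eq_pow_sum]
    rfl
  rw [hprod, Polynomial.algebraMap_eq, ← mul_assoc, ← Polynomial.C_mul,
    Polynomial.coeff_C_mul, Polynomial.coeff_X_pow]
  rw [apply_ite (MvPolynomial.eval v), MvPolynomial.eval_monomial, map_zero]
  by_cases h : μ.degree = D
  · rw [if_pos h, if_pos h.symm, mul_one]
  · rw [if_neg h, if_neg (fun hh => h hh.symm), mul_zero]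

/-- A polynomial function satisfying the Fréchet equation has total degree `≤ N - 1`. -/
lemma degree_bound {d : ℕ} (N : ℕ) (hN : 1 ≤ N) (p : MvPolynomial (Fin d) ℝ)
    (hp : ∀ x h : Fin d → ℝ, (fwdDiff h)^[N] (fun z => MvPolynomial.eval z p) x = 0) :
    p.totalDegree ≤ N - 1 := by
  by_contra hD
  set D := p.totalDegree with hDdef
  have hND : N ≤ D := by omega
  have hp0 : p ≠ 0 := by
    intro h
    rw [h, MvPolynomial.totalDegree_zero] at hDdef
    omega
  have hline : ∀ v : Fin d → ℝ, MvPolynomial.eval v (MvPolynomial.homogeneousComponent D p) = 0 := by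
    intro v
    have hcont : Continuous fun t : ℝ => MvPolynomial.eval (t • v) p := by
      have h1 : Continuous fun t : ℝ => t • v := Continuous.smul continuous_id continuous_const
      exact (MvPolynomial.continuous_eval p).comp h1
    obtain ⟨q, hqdeg, hqev⟩ := oneDim N hN (fun t => MvPolynomial.eval (t • v) p) hcont
      (fun x h => by
        rw [fwdDiff_iter_comp (fun t : ℝ => t • v) h (h • v)
          (fun t => by show (t + h) • v = t • v + h • v; rw [add_smul])
          (fun z => MvPolynomial.eval z p) N x]
        exact hp _ _)
    have hlc : (MvPolynomial.aeval (fun i => Polynomial.C (v i) * Polynomial.X) p) = q := by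
      apply Polynomial.funext
      intro t
      rw [eval_aeval, ← hqev t]
      have harg : (fun i => Polynomial.eval t (Polynomial.C (v i) * Polynomial.X)) = t • v := by
        funext i
        rw [Polynomial.eval_mul, Polynomial.eval_C, Polynomial.eval_X, Pi.smul_apply,
          smul_eq_mul, mul_comm]
      rw [harg]
    have hcl := coeff_lineComp v p D
    rw [hlc] at hcl
    rw [← hcl]
    exact Polynomial.coeff_eq_zero_of_natDegree_lt (by omega)
  have hcomp0 : MvPolynomial.homogeneousComponent D p = 0 :=
    MvPolynomial.funext fun x => by rw [hline x]; simp
  obtain ⟨μ, hmem, hdeg⟩ := Finset.exists_mem_eq_sup p.support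
    (MvPolynomial.support_nonempty.mpr hp0) (fun μ : Fin d →₀ ℕ => μ.sum fun _ e => e)
  have hdeg' : μ.degree = D := by
    rw [hDdef, MvPolynomial.totalDegree, hdeg]
    rfl
  have hcoeff := MvPolynomial.coeff_homogeneousComponent (n := D) (φ := p) μ
  rw [hcomp0, MvPolynomial.coeff_zero, if_pos hdeg'] at hcoeff
  exact (MvPolynomial.mem_support_iff.mp hmem) hcoeff.symm

lemma cons_add {d : ℕ} (a b : ℝ) (y z : Fin d → ℝ) :
    (Fin.cons a y : Fin (d+1) → ℝ) + Fin.cons b z = Fin.cons (a + b) (y + z) := by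
  funext i
  refine Fin.cases ?_ ?_ i <;> simp

lemma eval_polyaeval {e : ℕ} (x : Fin e → ℝ) (i : Fin e) (L : ℝ[X]) :
    MvPolynomial.eval x (Polynomial.aeval (MvPolynomial.X i : MvPolynomial (Fin e) ℝ) L)
      = L.eval (x i) := by
  induction L using Polynomial.induction_on with
  | C a => simp
  | add p q hp hq => simp [hp, hq]
  | monomial n a ih =>
    simp only [map_mul, Polynomial.eval_mul, map_pow, Polynomial.eval_pow,
      Polynomial.aeval_C, Polynomial.aeval_X, Polynomial.eval_C, Polynomial.eval_X,
      map_mul] at ih ⊢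
    simp [pow_succ]

/-- Existence of a representing polynomial (without degree bound), by induction on `d`. -/
lemma exists_poly (N : ℕ) (hN : 1 ≤ N) :
    ∀ (d : ℕ) (f : (Fin d → ℝ) → ℝ), Continuous f →
      (∀ x h : Fin d → ℝ, (fwdDiff h)^[N] f x = 0) →
      ∃ p : MvPolynomial (Fin d) ℝ, ∀ x, f x = MvPolynomial.eval x p := by
  intro d
  induction d with
  | zero =>
    intro f _ _
    refine ⟨MvPolynomial.C (f default), fun x => ?_⟩
    rw [Subsingleton.elim x default]
    simp
  | succ d IH =>
    intro f hf heq
    have hslice : ∀ c : ℝ, ∃ p : MvPolynomial (Fin d) ℝ,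
        ∀ y, f (Fin.cons c y) = MvPolynomial.eval y p := by
      intro c
      refine IH (fun y => f (Fin.cons c y)) ?_ ?_
      · have h1 : Continuous fun y : Fin d → ℝ => (Fin.cons c y : Fin (d+1) → ℝ) := by
          refine continuous_pi fun i => ?_
          refine Fin.cases ?_ ?_ i
          · simpa using continuous_const
          · intro j; simpa using continuous_apply j
        exact hf.comp h1
      · intro y k
        have hc := fwdDiff_iter_comp (fun y : Fin d → ℝ => (Fin.cons c y : Fin (d+1) → ℝ))
          k (Fin.cons (0:ℝ) k)
          (fun z => by
            show (Fin.cons c (z + k) : Fin (d+1) → ℝ) = Fin.cons c z + Fin.cons 0 k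
            rw [cons_add, add_zero]) f N y
        rw [hc]
        exact heq _ _
    choose P hP using hslice
    set v : ℕ → ℝ := fun n => (n : ℝ) with hv
    have hinj : Set.InjOn v (range N) := fun a _ b _ hab => Nat.cast_injective hab
    set p : MvPolynomial (Fin (d+1)) ℝ :=
      ∑ j ∈ range N,
        Polynomial.aeval (MvPolynomial.X 0) (Lagrange.basis (range N) v j)
          * MvPolynomial.rename Fin.succ (P (v j)) with hp
    refine ⟨p, fun x => ?_⟩
    set y : Fin d → ℝ := Fin.tail x with hy
    have hxy : (Fin.cons (x 0) y : Fin (d+1) → ℝ) = x := Fin.cons_self_tail x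
    have hcont : Continuous fun t : ℝ => f (Fin.cons t y) := by
      have h1 : Continuous fun t : ℝ => (Fin.cons t y : Fin (d+1) → ℝ) := by
        refine continuous_pi fun i => ?_
        refine Fin.cases ?_ ?_ i
        · simpa using continuous_id'
        · intro j; simpa using continuous_const
      exact hf.comp h1
    have heq1 : ∀ t s : ℝ, (fwdDiff s)^[N] (fun t => f (Fin.cons t y)) t = 0 := by
      intro t s
      have hc := fwdDiff_iter_comp (fun t : ℝ => (Fin.cons t y : Fin (d+1) → ℝ)) s
        (Fin.cons s (0 : Fin d → ℝ) : Fin (d+1) → ℝ)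
        (fun z => by
          show (Fin.cons (z + s) y : Fin (d+1) → ℝ)
            = Fin.cons z y + Fin.cons s (0 : Fin d → ℝ)
          rw [cons_add, add_zero]) f N t
      rw [hc]
      exact heq _ _
    obtain ⟨q, hqdeg, hqev⟩ := oneDim N hN _ hcont (fun a b => heq1 a b)
    have hqdeg' : q.degree < (#(range N) : WithBot ℕ) := by
      rw [card_range]
      refine lt_of_le_of_lt Polynomial.degree_le_natDegree ?_
      exact_mod_cast (by omega : q.natDegree < N)
    have hqI : q = Lagrange.interpolate (range N) v (fun n => f (Fin.cons (v n) y)) :=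
      Lagrange.eq_interpolate_of_eval_eq _ hinj hqdeg' (fun i _ => (hqev (v i)).symm)
    have hstart : f x = q.eval (x 0) := by rw [← hqev (x 0), hxy]
    have hrhs : MvPolynomial.eval x p
        = ∑ j ∈ range N, f (Fin.cons (v j) y) * (Lagrange.basis (range N) v j).eval (x 0) := by
      rw [hp, map_sum]
      refine Finset.sum_congr rfl fun j _ => ?_
      rw [map_mul, eval_polyaeval, MvPolynomial.eval_rename]
      have htail : (x ∘ Fin.succ) = y := rfl
      rw [htail, ← hP (v j) y]
      exact mul_comm _ _
    have hlhs : Polynomial.eval (x 0)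
          (Lagrange.interpolate (range N) v fun n => f (Fin.cons (v n) y))
        = ∑ j ∈ range N, f (Fin.cons (v j) y) * (Lagrange.basis (range N) v j).eval (x 0) := by
      rw [Lagrange.interpolate_apply, Polynomial.eval_finset_sum]
      exact Finset.sum_congr rfl fun j _ => by rw [Polynomial.eval_mul, Polynomial.eval_C]
    rw [hstart, hqI, hlhs, hrhs]

end Frechet

/-- **Fréchet's theorem for continuous functions on `ℝ^d`.** A continuous `f : ℝ^d → ℝ`
satisfies the fixed-step Fréchet functional equation
`∑_{k=0}^{N} binom(N,k) (-1)^{N-k} f (x + k h) = 0` for all `x, h ∈ ℝ^d` if and only if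
`f` is a polynomial function of total degree at most `N - 1`. -/
theorem frechet_continuous_solutions (d N : ℕ) (hd : 1 ≤ d) (hN : 1 ≤ N)
    (f : (Fin d → ℝ) → ℝ) (hf : Continuous f) :
    (∀ x h : Fin d → ℝ,
        ∑ k ∈ Finset.range (N + 1),
          (N.choose k : ℝ) * (-1) ^ (N - k) * f (x + k • h) = 0) ↔
      ∃ p : MvPolynomial (Fin d) ℝ,
        p.totalDegree ≤ N - 1 ∧ ∀ x : Fin d → ℝ, f x = MvPolynomial.eval x p := by
  constructor
  · intro hsum
    have hiter : ∀ x h : Fin d → ℝ, (fwdDiff h)^[N] f x = 0 := by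
      intro x h
      rw [← Frechet.sum_eq_iter]
      exact hsum x h
    obtain ⟨p, hp⟩ := Frechet.exists_poly N hN d f hf hiter
    refine ⟨p, ?_, hp⟩
    refine Frechet.degree_bound N hN p (fun x h => ?_)
    have hfp : (fun z => MvPolynomial.eval z p) = f := funext fun z => (hp z).symm
    rw [hfp]
    exact hiter x h
  · rintro ⟨p, hdeg, hp⟩ x h
    set r : ℝ[X] := MvPolynomial.aeval
      (fun i => Polynomial.C (x i) + Polynomial.C (h i) * Polynomial.X) p with hr
    have hφdeg : ∀ i, (Polynomial.C (x i) + Polynomial.C (h i) * Polynomial.X).natDegree ≤ 1 := by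
      intro i
      have h2 : (Polynomial.C (h i) * Polynomial.X).natDegree ≤ 1 :=
        le_trans Polynomial.natDegree_mul_le (by simp)
      exact le_trans (Polynomial.natDegree_add_le _ _) (max_le (by simp) h2)
    have hrdeg : r.natDegree < N :=
      lt_of_le_of_lt (le_trans (Frechet.natDegree_aeval_le _ hφdeg p) hdeg) (by omega)
    have hterm : ∀ k : ℕ, f (x + k • h) = r.eval ((0:ℝ) + k • (1:ℝ)) := by
      intro k
      rw [hp, hr, Frechet.eval_aeval]
      have h1 : ((0:ℝ) + k • (1:ℝ)) = (k : ℝ) := by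
        rw [zero_add, nsmul_eq_mul, mul_one]
      rw [h1]
      have harg : (fun i => Polynomial.eval (k:ℝ)
          (Polynomial.C (x i) + Polynomial.C (h i) * Polynomial.X)) = x + k • h := by
        funext i
        rw [Polynomial.eval_add, Polynomial.eval_C, Polynomial.eval_mul, Polynomial.eval_C,
          Polynomial.eval_X, Pi.add_apply, Pi.smul_apply, nsmul_eq_mul, mul_comm]
      rw [harg]
    calc ∑ k ∈ Finset.range (N + 1), (N.choose k : ℝ) * (-1) ^ (N - k) * f (x + k • h)
        = ∑ k ∈ Finset.range (N + 1), (N.choose k : ℝ) * (-1) ^ (N - k)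
            * (fun t => r.eval t) ((0:ℝ) + k • (1:ℝ)) :=
          Finset.sum_congr rfl fun k _ => by rw [hterm k]
      _ = (fwdDiff (1:ℝ))^[N] (fun t => Polynomial.eval t r) 0 :=
          Frechet.sum_eq_iter N (fun t => Polynomial.eval t r) 0 1
      _ = 0 := congrFun (Frechet.iter_polyeval_zero 1 N r hrdeg) 0
end

section
/- Let N ≥ 1, let X and Y be vector spaces over ℚ, and let f : X → Y. Then f satisfies the Fréchet equation with variable step, Δ_{h_1}Δ_{h_2}⋯Δ_{h_N} f(x) = 0 for all x, h_1, …, h_N ∈ X, if and only if f satisfies the Fréchet equation with fixed step, Δ_h^N f(x) = ∑_{k=0}^{N} binom(N,k)(−1)^{N−k} f(x+kh) = 0 for all x,h ∈ X. -/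
open Finset

/-- The forward difference operator `Δ_h f (x) = f (x + h) - f x`. -/
def fdiff1 {X Y : Type*} [Add X] [Sub Y] (h : X) (f : X → Y) : X → Y :=
  fun x => f (x + h) - f x

/-- The iterated difference operator `Δ_{h 0} Δ_{h 1} ⋯ Δ_{h (n-1)} f`. -/
def fdiffMulti {X Y : Type*} [Add X] [Sub Y] : (n : ℕ) → (Fin n → X) → (X → Y) → X → Y
  | 0, _, f => f
  | n + 1, h, f => fdiff1 (h 0) (fdiffMulti n (fun i => h i.succ) f)

section ActSection

variable {X Y : Type*} [AddCommGroup X] [AddCommGroup Y] [Module ℚ Y]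

/-- Action of the group algebra on functions. -/
noncomputable def act (p : AddMonoidAlgebra ℚ X) (f : X → Y) : X → Y :=
  fun x => p.coeff.sum fun a c => c • f (x + a)

lemma act_zero (f : X → Y) : act (0 : AddMonoidAlgebra ℚ X) f = 0 := by
  funext x; simp [act]

lemma act_add (p q : AddMonoidAlgebra ℚ X) (f : X → Y) :
    act (p + q) f = act p f + act q f := by
  funext x
  simp only [act, Pi.add_apply, AddMonoidAlgebra.coeff_add]
  exact Finsupp.sum_add_index' (by simp) (by intros; rw [add_smul])

lemma act_sub (p q : AddMonoidAlgebra ℚ X) (f : X → Y) :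
    act (p - q) f = act p f - act q f := by
  funext x
  simp only [act, Pi.sub_apply, AddMonoidAlgebra.coeff_sub]
  exact Finsupp.sum_sub_index (by intros; rw [sub_smul])

lemma act_single (a : X) (c : ℚ) (f : X → Y) :
    act (AddMonoidAlgebra.single a c) f = fun x => c • f (x + a) := by
  funext x
  simp only [act, AddMonoidAlgebra.coeff_single]
  exact Finsupp.sum_single_index (by simp)

lemma act_one (f : X → Y) : act (1 : AddMonoidAlgebra ℚ X) f = f := by
  rw [AddMonoidAlgebra.one_def, act_single]; simp

lemma act_apply_zero (p : AddMonoidAlgebra ℚ X) : act p (0 : X → Y) = 0 := by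
  funext x; simp [act]

lemma act_sum {ι : Type*} (s : Finset ι) (g : ι → AddMonoidAlgebra ℚ X) (f : X → Y) :
    act (∑ i ∈ s, g i) f = ∑ i ∈ s, act (g i) f := by
  induction s using Finset.cons_induction with
  | empty => simp [act_zero]
  | cons i s hi ih => rw [Finset.sum_cons, Finset.sum_cons, act_add, ih]

lemma act_mul (p q : AddMonoidAlgebra ℚ X) (f : X → Y) :
    act (p * q) f = act p (act q f) := by
  induction p using AddMonoidAlgebra.induction_linear with
  | zero => simp [act_zero, act_apply_zero]
  | add p₁ p₂ h1 h2 => rw [add_mul, act_add, act_add, h1, h2]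
  | single a c =>
    induction q using AddMonoidAlgebra.induction_linear with
    | zero => simp [act_zero, act_apply_zero, mul_zero]
    | add q₁ q₂ h1 h2 =>
      rw [mul_add, act_add, act_add, h1, h2]
      rw [act_single, act_single, act_single]
      funext x; simp [smul_add]
    | single b d =>
      rw [AddMonoidAlgebra.single_mul_single, act_single, act_single, act_single]
      funext x
      simp only [mul_smul, add_assoc]


noncomputable def delta {X : Type*} [AddCommGroup X] (g : X) : AddMonoidAlgebra ℚ X :=
  AddMonoidAlgebra.single g 1 - 1

variable {X Y : Type*} [AddCommGroup X] [AddCommGroup Y] [Module ℚ Y]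

lemma act_delta (g : X) (f : X → Y) : act (delta g) f = fdiff1 g f := by
  funext x
  rw [delta, act_sub, act_single, act_one]
  simp [fdiff1]

lemma fdiffMulti_eq_act : ∀ (n : ℕ) (h : Fin n → X) (f : X → Y),
    fdiffMulti n h f = act (∏ i, delta (h i)) f
  | 0, h, f => by simp [fdiffMulti, act_one]
  | n + 1, h, f => by
    rw [fdiffMulti, fdiffMulti_eq_act n (fun i => h i.succ) f, Fin.prod_univ_succ, act_mul,
      act_delta]

lemma act_delta_pow_eq_iter (g : X) (f : X → Y) : ∀ n : ℕ,
    act (delta g ^ n) f = (fdiff1 g)^[n] f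
  | 0 => by rw [pow_zero, act_one, Function.iterate_zero, id_eq]
  | n + 1 => by
    rw [pow_succ', act_mul, act_delta, act_delta_pow_eq_iter g f n,
      Function.iterate_succ_apply']

lemma fdiff1_eq_fwdDiff (g : X) : (fdiff1 (Y := Y) g) = fwdDiff g := rfl

lemma act_delta_pow (N : ℕ) (g : X) (f : X → Y) (x : X) :
    act (delta g ^ N) f x
      = ∑ k ∈ Finset.range (N + 1),
          ((-1 : ℤ) ^ (N - k) * (N.choose k : ℤ)) • f (x + k • g) := by
  rw [act_delta_pow_eq_iter, fdiff1_eq_fwdDiff, fwdDiff_iter_eq_sum_shift]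

end ActSection


namespace DjokovicCore

variable {A : Type*} [CommRing A]

/-- monomial in the `x i` -/
def xpow {N : ℕ} (x : Fin N → A) (m : Fin N → ℕ) : A := ∏ i, x i ^ m i

/-- multiplicity of `i` in the family of sets `φ` -/
def Mfun {N : ℕ} (φ : Fin N → Finset (Fin N)) : Fin N → ℕ :=
  fun i => (univ.filter fun j => i ∈ φ j).card

lemma xpow_add {N : ℕ} (x : Fin N → A) (a b : Fin N → ℕ) :
    xpow x (fun i => a i + b i) = xpow x a * xpow x b := by
  rw [xpow, xpow, xpow, ← prod_mul_distrib]
  exact prod_congr rfl fun i _ => pow_add _ _ _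

lemma prod_mul_xpow {N : ℕ} (x : Fin N → A) (m : Fin N → ℕ) :
    (∏ i, x i) * xpow x m = xpow x (fun i => m i + 1) := by
  rw [xpow, xpow, ← prod_mul_distrib]
  exact prod_congr rfl fun i _ => by rw [pow_succ, mul_comm]

lemma supSum (N : ℕ) (B : Finset (Fin N)) :
    ∑ S : Finset (Fin N), (if B ⊆ S then ((-1 : ℤ) ^ (N - S.card)) else 0)
      = if B = Finset.univ then 1 else 0 := by
  classical
  rw [← Finset.sum_filter]
  rw [Finset.sum_nbij' (i := fun S => S \ B) (j := fun T => B ∪ T)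
    (t := Bᶜ.powerset) (g := fun T => (-1 : ℤ) ^ (Bᶜ.card - T.card))
    (hi := by
      intro S hS
      rw [mem_powerset]
      intro a ha
      rw [mem_sdiff] at ha
      simpa using ha.2)
    (hj := by
      intro T hT
      simp only [mem_filter, mem_univ, true_and]
      exact subset_union_left)
    (left_neg := by
      intro S hS
      simp only [mem_filter, mem_univ, true_and] at hS
      exact Finset.union_sdiff_of_subset hS)
    (right_neg := by
      intro T hT
      rw [mem_powerset] at hT
      apply Finset.union_sdiff_cancel_left
      rw [Finset.disjoint_left]
      intro a haB haT
      have := hT haT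
      simp at this
      exact this haB)
    (h := by
      intro S hS
      simp only [mem_filter, mem_univ, true_and] at hS
      have h1 : (S \ B).card = S.card - B.card := card_sdiff_of_subset hS
      have h2 : B.card ≤ S.card := card_le_card hS
      have h3 : S.card ≤ N := by
        simpa using card_le_card (subset_univ S)
      have h4 : Bᶜ.card = N - B.card := by
        rw [Finset.card_compl]
        simp
      show (-1:ℤ) ^ (N - S.card) = (-1) ^ (Bᶜ.card - (S \ B).card)
      congr 1
      omega)]
  have hcongr : ∀ T ∈ Bᶜ.powerset,
      (-1 : ℤ) ^ (Bᶜ.card - T.card) = (-1) ^ Bᶜ.card * (-1) ^ T.card := by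
    intro T hT
    have ht : T.card ≤ Bᶜ.card := card_le_card (mem_powerset.1 hT)
    calc (-1 : ℤ) ^ (Bᶜ.card - T.card)
        = (-1 : ℤ) ^ (Bᶜ.card - T.card) * ((-1 : ℤ) ^ 2) ^ T.card := by norm_num
      _ = (-1 : ℤ) ^ (Bᶜ.card - T.card + 2 * T.card) := by rw [← pow_mul, ← pow_add]
      _ = (-1 : ℤ) ^ (Bᶜ.card + T.card) := by congr 1; omega
      _ = (-1) ^ Bᶜ.card * (-1) ^ T.card := pow_add _ _ _
  rw [Finset.sum_congr rfl hcongr, ← Finset.mul_sum,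
    Finset.sum_powerset_neg_one_pow_card]
  by_cases hB : B = Finset.univ
  · simp [hB]
  · have : Bᶜ ≠ ∅ := fun h => hB (by simpa using congrArg compl h)
    simp [hB, this]


def bigSet (N : ℕ) : Finset (Fin N → Finset (Fin N)) :=
  Fintype.piFinset fun _ : Fin N => ((Finset.univ : Finset (Fin N)).powerset.erase ∅)

def goodSet (N : ℕ) : Finset (Fin N → Finset (Fin N)) :=
  (bigSet N).filter fun φ => Finset.univ.sup φ = Finset.univ

def permSet (N : ℕ) : Finset (Fin N → Finset (Fin N)) :=
  (goodSet N).filter fun φ => Mfun φ = fun _ => 1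

def badSet (N : ℕ) : Finset (Fin N → Finset (Fin N)) :=
  (goodSet N).filter fun φ => ¬ Mfun φ = fun _ => 1

lemma good_cover {N : ℕ} {φ : Fin N → Finset (Fin N)} (hφ : φ ∈ goodSet N) (i : Fin N) :
    1 ≤ Mfun φ i := by
  rw [goodSet, mem_filter] at hφ
  have : i ∈ Finset.univ.sup φ := by rw [hφ.2]; exact mem_univ i
  rw [Finset.mem_sup] at this
  obtain ⟨j, _, hj⟩ := this
  rw [Mfun]
  exact card_pos.2 ⟨j, mem_filter.2 ⟨mem_univ j, hj⟩⟩

lemma bad_sum {N : ℕ} {φ : Fin N → Finset (Fin N)} (hφ : φ ∈ badSet N) :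
    N + 1 ≤ ∑ i, Mfun φ i := by
  rw [badSet, mem_filter] at hφ
  obtain ⟨hg, hne⟩ := hφ
  obtain ⟨i₀, hi₀⟩ := Function.ne_iff.1 hne
  have h2 : 1 < Mfun φ i₀ := by
    have := good_cover hg i₀
    omega
  have := Finset.sum_lt_sum (f := fun _ : Fin N => 1) (g := Mfun φ)
    (fun i _ => good_cover hg i) ⟨i₀, mem_univ i₀, h2⟩
  simpa using this

lemma perm_card_ne_zero (N : ℕ) : (permSet N).card ≠ 0 := by
  apply Finset.card_ne_zero_of_mem (a := fun j => ({j} : Finset (Fin N)))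
  rw [permSet, mem_filter, goodSet, mem_filter, bigSet]
  refine ⟨⟨?_, ?_⟩, ?_⟩
  · rw [Fintype.mem_piFinset]
    intro j
    simp
  · apply Finset.eq_univ_of_forall
    intro i
    rw [Finset.mem_sup]
    exact ⟨i, mem_univ i, mem_singleton_self i⟩
  · funext i
    rw [Mfun]
    have : (univ.filter fun j : Fin N => i ∈ ({j} : Finset (Fin N))) = {i} := by
      ext j
      simp [eq_comm]
    rw [this, card_singleton]

variable {A : Type*} [CommRing A]

lemma vEq {N : ℕ} (x : Fin N → A) (φ : Fin N → Finset (Fin N)) :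
    (∏ j, ∏ i ∈ φ j, x i) = xpow x (Mfun φ) := by
  rw [xpow]
  rw [Finset.prod_comm' (s' := fun i => univ.filter fun j => i ∈ φ j) (t' := univ)
    (by intro j i; simp)]
  exact prod_congr rfl fun i _ => by rw [prod_const, Mfun]

lemma master {N : ℕ} (x : Fin N → A)
    (hx : ∀ S : Finset (Fin N), ((∏ i ∈ S, (1 + x i)) - 1) ^ N = 0) :
    (0 : A) = (permSet N).card • (∏ i, x i) + ∑ φ ∈ badSet N, xpow x (Mfun φ) := by
  classical
  have h0 : (0 : A) = ∑ S : Finset (Fin N),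
      ((-1 : ℤ) ^ (N - S.card)) • (((∏ i ∈ S, (1 + x i)) - 1) ^ N) := by
    symm
    apply Finset.sum_eq_zero
    intro S _
    rw [hx S, smul_zero]
  have hy : ∀ S : Finset (Fin N),
      (∏ i ∈ S, (1 + x i)) - 1 = ∑ T ∈ S.powerset.erase ∅, ∏ i ∈ T, x i := by
    intro S
    have h1 : (∏ i ∈ S, (1 + x i)) = ∑ T ∈ S.powerset, ∏ i ∈ T, x i := by
      calc ∏ i ∈ S, (1 + x i) = ∏ i ∈ S, (x i + 1) :=
            prod_congr rfl fun i _ => add_comm _ _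
        _ = ∑ T ∈ S.powerset, (∏ i ∈ T, x i) * ∏ i ∈ S \ T, (1 : A) := prod_add _ _ _
        _ = ∑ T ∈ S.powerset, ∏ i ∈ T, x i := by simp
    rw [h1, ← Finset.sum_erase_add S.powerset _ (Finset.empty_mem_powerset S)]
    simp
  have hpi : ∀ S : Finset (Fin N), Fintype.piFinset (fun _ : Fin N => S.powerset.erase ∅)
      = (bigSet N).filter (fun φ => Finset.univ.sup φ ⊆ S) := by
    intro S
    ext φ
    rw [Fintype.mem_piFinset, mem_filter, bigSet, Fintype.mem_piFinset]
    simp only [mem_erase, mem_powerset]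
    constructor
    · intro h
      exact ⟨fun j => ⟨(h j).1, subset_univ _⟩, Finset.sup_le fun j _ => (h j).2⟩
    · intro h j
      exact ⟨(h.1 j).1, (Finset.le_sup (mem_univ j)).trans h.2⟩
  have h1 : (0 : A) = ∑ φ ∈ bigSet N,
      (if Finset.univ.sup φ = Finset.univ then (1 : ℤ) else 0) • ∏ j, ∏ i ∈ φ j, x i := by
    rw [h0]
    rw [Finset.sum_congr rfl (fun S _ => by
      rw [hy S, Finset.sum_pow', hpi S, Finset.sum_filter, Finset.smul_sum])]
    rw [Finset.sum_comm]
    apply Finset.sum_congr rfl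
    intro φ _
    rw [← supSum N (Finset.univ.sup φ), Finset.sum_smul]
    apply Finset.sum_congr rfl
    intro S _
    split_ifs <;> simp
  rw [Finset.sum_congr rfl (fun φ (_ : φ ∈ bigSet N) => by
      rw [ite_smul, one_smul, zero_smul]), ← Finset.sum_filter] at h1
  rw [← goodSet] at h1
  rw [← Finset.sum_filter_add_sum_filter_not (goodSet N)
    (fun φ => Mfun φ = fun _ => 1)] at h1
  rw [← permSet, ← badSet] at h1
  have hperm : ∑ φ ∈ permSet N, ∏ j, ∏ i ∈ φ j, x i
      = (permSet N).card • (∏ i, x i) := by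
    rw [← Finset.sum_const]
    apply Finset.sum_congr rfl
    intro φ hφ
    rw [permSet, mem_filter] at hφ
    rw [vEq, hφ.2]
    rw [xpow]
    simp
  have hbad : ∑ φ ∈ badSet N, ∏ j, ∏ i ∈ φ j, x i
      = ∑ φ ∈ badSet N, xpow x (Mfun φ) :=
    Finset.sum_congr rfl fun φ _ => vEq x φ
  rw [hperm, hbad] at h1
  exact h1


theorem core {A : Type*} [CommRing A] [Algebra ℚ A] (N : ℕ) (hN : 1 ≤ N) (x : Fin N → A)
    (hx : ∀ S : Finset (Fin N), ((∏ i ∈ S, (1 + x i)) - 1) ^ N = 0) :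
    ∏ i, x i = 0 := by
  classical
  have hxN : ∀ i, x i ^ N = 0 := by
    intro i
    have := hx {i}
    simpa using this
  have key : ∀ k : ℕ, ∀ m : Fin N → ℕ, N * N ≤ (∑ i, m i) + k →
      (∏ i, x i) * xpow x m = 0 := by
    intro k
    induction k with
    | zero =>
      intro m hm
      obtain ⟨i₀, hi₀⟩ : ∃ i, N ≤ m i := by
        by_contra hcon
        push_neg at hcon
        have hle : ∑ i, m i ≤ ∑ _i : Fin N, (N - 1) :=
          Finset.sum_le_sum fun i _ => by have := hcon i; omega
        rw [Finset.sum_const, card_univ, Fintype.card_fin, smul_eq_mul] at hle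
        have h5 : N * N ≤ N * (N - 1) := le_trans (by omega) hle
        have h6 : N ≤ N - 1 := Nat.le_of_mul_le_mul_left h5 (by omega)
        omega
      have hzero : xpow x m = 0 := by
        rw [xpow, ← Finset.mul_prod_erase univ _ (mem_univ i₀),
          show m i₀ = N + (m i₀ - N) by omega, pow_add, hxN i₀, zero_mul, zero_mul]
      rw [hzero, mul_zero]
    | succ k ih =>
      intro m hm
      by_cases hc : N * N ≤ (∑ i, m i) + k
      · exact ih m hc
      · have hmaster := master x hx
        have h2 : (0 : A) = (permSet N).card • ((∏ i, x i) * xpow x m)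
            + ∑ φ ∈ badSet N, xpow x (Mfun φ) * xpow x m := by
          calc (0 : A) = 0 * xpow x m := (zero_mul _).symm
            _ = ((permSet N).card • (∏ i, x i)
                  + ∑ φ ∈ badSet N, xpow x (Mfun φ)) * xpow x m := by rw [← hmaster]
            _ = _ := by rw [add_mul, smul_mul_assoc, Finset.sum_mul]
        have h3 : ∀ φ ∈ badSet N, xpow x (Mfun φ) * xpow x m = 0 := by
          intro φ hφ
          have hφ' := hφ
          rw [badSet, mem_filter] at hφ'
          have hcov : ∀ i, 1 ≤ Mfun φ i := fun i => good_cover hφ'.1 i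
          have hbs := bad_sum hφ
          have heq : xpow x (Mfun φ) * xpow x m
              = (∏ i, x i) * xpow x (fun i => Mfun φ i - 1 + m i) := by
            rw [← xpow_add, prod_mul_xpow]
            congr 1
            funext i
            have := hcov i
            omega
          rw [heq]
          apply ih
          refine le_trans hm ?_
          have e2 : ∑ i, (Mfun φ i - 1 + m i) = ∑ i, (Mfun φ i - 1) + ∑ i, m i :=
            Finset.sum_add_distrib
          have e3 : ∑ i, (Mfun φ i - 1) + N = ∑ i, Mfun φ i := by
            have e4 : ∑ i, (Mfun φ i - 1 + 1) = ∑ i, Mfun φ i :=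
              Finset.sum_congr rfl fun i _ => by have := hcov i; omega
            rw [Finset.sum_add_distrib, Finset.sum_const, card_univ, Fintype.card_fin,
              smul_eq_mul, mul_one] at e4
            exact e4
          omega
        rw [Finset.sum_eq_zero h3, add_zero] at h2
        set z := (∏ i, x i) * xpow x m with hz
        have hq : ((permSet N).card : ℚ) • z = 0 := by
          rw [Nat.cast_smul_eq_nsmul]
          exact h2.symm
        have hcne : ((permSet N).card : ℚ) ≠ 0 := Nat.cast_ne_zero.2 (perm_card_ne_zero N)
        calc z = (((permSet N).card : ℚ)⁻¹ * ((permSet N).card : ℚ)) • z := by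
              rw [inv_mul_cancel₀ hcne, one_smul]
          _ = ((permSet N).card : ℚ)⁻¹ • (((permSet N).card : ℚ) • z) := mul_smul _ _ _
          _ = 0 := by rw [hq, smul_zero]
  have hfin := key (N * N) (fun _ => 0) (by simp)
  rw [xpow] at hfin
  simpa using hfin

end DjokovicCore


open DjokovicCore in
/-- **Djoković's equivalence.** For `f : X → Y` between `ℚ`-vector spaces, the
variable-step Fréchet equation `Δ_{h₁} ⋯ Δ_{h_N} f = 0` holds for all steps if and only if
the fixed-step equation `Δ_h^N f (x) = ∑_{k=0}^N binom(N,k) (-1)^{N-k} f(x + k h) = 0`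
holds for all `x, h`. -/
theorem frechet_variable_iff_fixed_step
    (N : ℕ) (hN : 1 ≤ N)
    (X Y : Type*) [AddCommGroup X] [Module ℚ X] [AddCommGroup Y] [Module ℚ Y]
    (f : X → Y) :
    (∀ (x : X) (h : Fin N → X), fdiffMulti N h f x = 0) ↔
      (∀ x h : X,
        ∑ k ∈ Finset.range (N + 1),
          ((-1 : ℤ) ^ (N - k) * (N.choose k : ℤ)) • f (x + k • h) = 0) := by
  constructor
  · intro hvar x g
    have hv := hvar x (fun _ => g)
    rw [fdiffMulti_eq_act, Finset.prod_const, card_univ, Fintype.card_fin] at hv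
    rw [← act_delta_pow]
    exact hv
  · intro hfix x h
    classical
    set K : Ideal (AddMonoidAlgebra ℚ X) :=
      { carrier := {p | act p f = 0}
        add_mem' := fun {a b} ha hb => by
          simp only [Set.mem_setOf_eq] at *
          rw [act_add, ha, hb, add_zero]
        zero_mem' := act_zero f
        smul_mem' := fun c p hp => by
          simp only [Set.mem_setOf_eq] at *
          rw [smul_eq_mul, act_mul, hp, act_apply_zero] } with hK
    have memK : ∀ p : AddMonoidAlgebra ℚ X, p ∈ K ↔ act p f = 0 := fun p => Iff.rfl
    have hdeltaK : ∀ g : X, delta g ^ N ∈ K := by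
      intro g
      rw [memK]
      funext y
      rw [act_delta_pow]
      exact hfix y g
    set mk := Ideal.Quotient.mk K with hmk
    set xq : Fin N → AddMonoidAlgebra ℚ X ⧸ K := fun i => mk (AddMonoidAlgebra.single (h i) 1) - 1
      with hxq
    have hx : ∀ S : Finset (Fin N), ((∏ i ∈ S, (1 + xq i)) - 1) ^ N = 0 := by
      intro S
      have h1 : ∀ i, 1 + xq i = mk (AddMonoidAlgebra.single (h i) 1) := fun i => by
        rw [hxq]; ring
      rw [Finset.prod_congr rfl fun i _ => h1 i, ← map_prod, AddMonoidAlgebra.prod_single,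
        Finset.prod_const_one]
      have h2 : (mk (AddMonoidAlgebra.single (∑ i ∈ S, h i) (1 : ℚ)) - 1) ^ N
          = mk (delta (∑ i ∈ S, h i) ^ N) := by
        rw [delta, map_pow, map_sub, map_one]
      rw [h2, Ideal.Quotient.eq_zero_iff_mem]
      exact hdeltaK _
    have hprod : ∏ i, xq i = 0 := core N hN xq hx
    have hmem : (∏ i, delta (h i)) ∈ K := by
      rw [← Ideal.Quotient.eq_zero_iff_mem, map_prod]
      rw [← hprod]
      apply Finset.prod_congr rfl
      intro i _
      rw [delta, map_sub, map_one]
    rw [fdiffMulti_eq_act]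
    have := (memK _).1 hmem
    rw [this]
    rfl
end

section
/- Let N ≥ 1 and let η ∈ ℂ be a primitive 2N-th root of unity. Then neither the function f(z) = z^N nor the function g(z) = conj(z)^N satisfies the Haruki functional equation; that is, there exist x,y ∈ ℂ with ∑_{k=0}^{N-1} f(x + η^{2k}y) ≠ ∑_{k=0}^{N-1} f(x + η^{2k+1}y), and similarly for g. -/
/-- Neither `z ↦ z^N` nor `z ↦ conj(z)^N` satisfies the Haruki functional equation
associated with a primitive `2N`-th root of unity `η`. -/
theorem zpowN_not_haruki (N : ℕ) (hN : 1 ≤ N) (η : ℂ) (hη : IsPrimitiveRoot η (2 * N)) :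
    (∃ x y : ℂ,
      ∑ k ∈ Finset.range N, (x + η ^ (2 * k) * y) ^ N ≠
        ∑ k ∈ Finset.range N, (x + η ^ (2 * k + 1) * y) ^ N) ∧
    (∃ x y : ℂ,
      ∑ k ∈ Finset.range N, (starRingEnd ℂ) (x + η ^ (2 * k) * y) ^ N ≠
        ∑ k ∈ Finset.range N, (starRingEnd ℂ) (x + η ^ (2 * k + 1) * y) ^ N) := by
  have h2N : η ^ (2 * N) = 1 := hη.pow_eq_one
  have hprim2 : IsPrimitiveRoot (η ^ N) 2 := by
    have := hη.pow (by positivity : 0 < 2 * N) (mul_comm 2 N)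
    exact this
  have hNeg : η ^ N = -1 := hprim2.eq_neg_one_of_two_right
  have hEven : ∀ k : ℕ, (η ^ (2 * k)) ^ N = 1 := by
    intro k
    rw [← pow_mul, show 2 * k * N = 2 * N * k by ring, pow_mul, h2N, one_pow]
  have hOdd : ∀ k : ℕ, (η ^ (2 * k + 1)) ^ N = -1 := by
    intro k
    rw [← pow_mul, show (2 * k + 1) * N = 2 * N * k + N by ring, pow_add, pow_mul, h2N,
      one_pow, one_mul, hNeg]
  have hNne : (N : ℂ) ≠ -(N : ℂ) := by
    intro h
    have : (2 : ℂ) * N = 0 := by linear_combination h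
    simp only [mul_eq_zero, Nat.cast_eq_zero] at this
    rcases this with h | h
    · norm_num at h
    · omega
  constructor
  · refine ⟨0, 1, ?_⟩
    simp only [zero_add, mul_one, hEven, hOdd, Finset.sum_const, Finset.card_range,
      nsmul_eq_mul, mul_one, mul_neg]
    exact hNne
  · refine ⟨0, 1, ?_⟩
    have h1 : ∀ k : ℕ, (starRingEnd ℂ) (0 + η ^ (2 * k)) ^ N = 1 := by
      intro k
      rw [zero_add, ← map_pow, hEven, map_one]
    have h2 : ∀ k : ℕ, (starRingEnd ℂ) (0 + η ^ (2 * k + 1)) ^ N = -1 := by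
      intro k
      rw [zero_add, ← map_pow, hOdd, map_neg, map_one]
    simp only [mul_one, h1, h2, Finset.sum_const, Finset.card_range, nsmul_eq_mul, mul_one, mul_neg]
    exact hNne
end

section
/- Let N ≥ 1 and let η ∈ ℂ be a primitive 2N-th root of unity. The function g_N(z) = z^{N-1}·conj(z)^{N-1} = |z|^{2(N-1)} satisfies the Haruki functional equation: ∑_{k=0}^{N-1} g_N(x + η^{2k}y) = ∑_{k=0}^{N-1} g_N(x + η^{2k+1}y) for all x,y ∈ ℂ. -/
open Finset

lemma haruki_geom_key {N : ℕ} (hN : 1 ≤ N) {η : ℂ} (hη : IsPrimitiveRoot η (2 * N))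
    (d : ℤ) (hd : d.natAbs < N) :
    ∑ k ∈ range N, η ^ ((2 * (k : ℤ)) * d) = ∑ k ∈ range N, η ^ ((2 * (k : ℤ) + 1) * d) := by
  have hη0 : η ≠ 0 := hη.ne_zero (by omega)
  rcases eq_or_ne d 0 with rfl | hd0
  · simp
  have hr1 : η ^ ((2 : ℤ) * d) ≠ 1 := by
    intro h
    have h2 : ((2 * N : ℕ) : ℤ) ∣ 2 * d := (hη.zpow_eq_one_iff_dvd _).mp h
    have hNd : (N : ℤ) ∣ d := by
      have h2' : (2 : ℤ) * N ∣ 2 * d := by push_cast at h2; exact h2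
      exact (mul_dvd_mul_iff_left (two_ne_zero)).mp h2'
    have : N ∣ d.natAbs := by
      have := Int.natAbs_dvd_natAbs.mpr hNd
      simpa using this
    have := Nat.le_of_dvd (Int.natAbs_pos.mpr hd0) this
    omega
  have hrN : (η ^ ((2 : ℤ) * d)) ^ N = 1 := by
    rw [← zpow_natCast (η ^ ((2 : ℤ) * d)), ← zpow_mul]
    have : (2 : ℤ) * d * N = (2 * N : ℕ) * d := by push_cast; ring
    rw [this, zpow_mul, zpow_natCast, hη.pow_eq_one, one_zpow]
  have hsum : ∑ k ∈ range N, (η ^ ((2 : ℤ) * d)) ^ k = 0 := by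
    rw [geom_sum_eq hr1, hrN, sub_self, zero_div]
  have hL : ∀ k : ℕ, η ^ ((2 * (k : ℤ)) * d) = (η ^ ((2 : ℤ) * d)) ^ k := by
    intro k
    rw [← zpow_natCast (η ^ ((2 : ℤ) * d)), ← zpow_mul]
    ring_nf
  have hR : ∀ k : ℕ, η ^ ((2 * (k : ℤ) + 1) * d) = η ^ d * (η ^ ((2 : ℤ) * d)) ^ k := by
    intro k
    rw [← zpow_natCast (η ^ ((2 : ℤ) * d)), ← zpow_mul, ← zpow_add₀ hη0]
    ring_nf
  simp only [hL, hR]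
  rw [hsum, ← mul_sum, hsum, mul_zero]

/-- The function `g_N(z) = z^{N-1} conj(z)^{N-1} = |z|^{2(N-1)}` satisfies the Haruki
functional equation associated with a primitive `2N`-th root of unity `η`. -/
theorem absPow_satisfies_haruki (N : ℕ) (hN : 1 ≤ N) (η : ℂ)
    (hη : IsPrimitiveRoot η (2 * N)) :
    ∀ x y : ℂ,
      ∑ k ∈ Finset.range N,
          (x + η ^ (2 * k) * y) ^ (N - 1) * (starRingEnd ℂ) (x + η ^ (2 * k) * y) ^ (N - 1) =
        ∑ k ∈ Finset.range N,
          (x + η ^ (2 * k + 1) * y) ^ (N - 1) *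
            (starRingEnd ℂ) (x + η ^ (2 * k + 1) * y) ^ (N - 1) := by
  intro x y
  have hη0 : η ≠ 0 := hη.ne_zero (by omega)
  set n := N - 1 with hn
  have hnN : n < N := by omega
  have hconj : (starRingEnd ℂ) η = η⁻¹ :=
    (Complex.inv_eq_conj (hη.norm'_eq_one (by omega))).symm
  have expand : ∀ m : ℕ,
      (x + η ^ m * y) ^ n * (starRingEnd ℂ) (x + η ^ m * y) ^ n
      = ∑ i ∈ range (n + 1), ∑ j ∈ range (n + 1),
          (x ^ i * y ^ (n - i) * (starRingEnd ℂ) x ^ j * (starRingEnd ℂ) y ^ (n - j)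
            * (n.choose i) * (n.choose j)) * η ^ ((m : ℤ) * ((j : ℤ) - i)) := by
    intro m
    have hc : (starRingEnd ℂ) (x + η ^ m * y)
        = (starRingEnd ℂ) x + (η ^ m)⁻¹ * (starRingEnd ℂ) y := by
      rw [map_add, map_mul, map_pow, hconj, inv_pow]
    rw [hc, add_pow, add_pow, Finset.sum_mul_sum]
    refine Finset.sum_congr rfl fun i hi => Finset.sum_congr rfl fun j hj => ?_
    have hi' : i ≤ n := by simpa using Nat.lt_succ_iff.mp (mem_range.mp hi)
    have hj' : j ≤ n := by simpa using Nat.lt_succ_iff.mp (mem_range.mp hj)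
    have hpow : (η ^ m) ^ (n - i) * ((η ^ m)⁻¹) ^ (n - j)
        = η ^ ((m : ℤ) * ((j : ℤ) - i)) := by
      rw [inv_pow, ← pow_mul, ← pow_mul, ← zpow_natCast η (m * (n - i)),
        ← zpow_natCast η (m * (n - j)), ← zpow_neg, ← zpow_add₀ hη0]
      congr 1
      push_cast [Nat.cast_sub hi', Nat.cast_sub hj']
      ring
    calc x ^ i * (η ^ m * y) ^ (n - i) * (n.choose i : ℂ)
          * ((starRingEnd ℂ) x ^ j * ((η ^ m)⁻¹ * (starRingEnd ℂ) y) ^ (n - j)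
            * (n.choose j : ℂ))
        = (x ^ i * y ^ (n - i) * (starRingEnd ℂ) x ^ j * (starRingEnd ℂ) y ^ (n - j)
            * (n.choose i) * (n.choose j))
          * ((η ^ m) ^ (n - i) * ((η ^ m)⁻¹) ^ (n - j)) := by
          rw [mul_pow, mul_pow]; ring
      _ = _ := by rw [hpow]
  simp only [expand]
  rw [Finset.sum_comm]
  conv_rhs => rw [Finset.sum_comm]
  refine Finset.sum_congr rfl fun i hi => ?_
  rw [Finset.sum_comm]
  conv_rhs => rw [Finset.sum_comm]
  refine Finset.sum_congr rfl fun j hj => ?_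
  rw [← Finset.mul_sum, ← Finset.mul_sum]
  congr 1
  have hd : ((j : ℤ) - i).natAbs < N := by
    have := mem_range.mp hi
    have := mem_range.mp hj
    omega
  have key := haruki_geom_key hN hη ((j : ℤ) - i) hd
  calc ∑ k ∈ range N, η ^ (((2 * k : ℕ) : ℤ) * ((j : ℤ) - i))
      = ∑ k ∈ range N, η ^ ((2 * (k : ℤ)) * ((j : ℤ) - i)) := by
        refine Finset.sum_congr rfl fun k _ => ?_; norm_num
    _ = ∑ k ∈ range N, η ^ ((2 * (k : ℤ) + 1) * ((j : ℤ) - i)) := key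
    _ = _ := by refine Finset.sum_congr rfl fun k _ => ?_; norm_num
end
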